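/- arXiv:1011.6513 — 10 statements merged into one kernel-verified Lean document; each statement's English description precedes it below -/
import Mathlib

section
/- The dynamical system x' = q₊(y − x) + β(x² − x), −y' = q₋(x − y) + β(y² − y) has no equilibria in the interior of the unit square: there are no real numbers x, y with 0 < x < 1 and 0 < y < 1 such that q₊(y − x) + β(x² − x) = 0 and q₋(x − y) + β(y² − y) = 0. -/
/-- The dynamical system `x' = q₊(y − x) + β(x² − x)`, `−y' = q₋(x − y) + β(y² − y)`
has no equilibria in the interior of the unit square. -/
theorem no_equilibria_in_interior
    (qm qp β : ℝ) (hqp : 0 < qp) (hq : qp < qm) (hβ : 0 < β) :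
    ¬ ∃ x y : ℝ, 0 < x ∧ x < 1 ∧ 0 < y ∧ y < 1 ∧
      qp * (y - x) + β * (x ^ 2 - x) = 0 ∧
      qm * (x - y) + β * (y ^ 2 - y) = 0 := by
  rintro ⟨x, y, hx0, hx1, hy0, hy1, h1, h2⟩
  have hxy : x < y := by nlinarith [mul_pos hx0 (sub_pos.mpr hx1)]
  have hyx : y < x := by nlinarith [mul_pos hy0 (sub_pos.mpr hy1)]
  linarith
end

section
/- For every integer n ≥ 2, the quantity K₊ + n K₋ − (n + 1) q₋ a₁ is strictly positive, where a₁ := (K₋ + K₊ − √((K₋ + K₊)² − 4 q₋ q₊)) / (2 q₋). -/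
/-- For every integer `n ≥ 2`, the denominator `K₊ + n K₋ − (n+1) q₋ a₁` of the
recurrence is strictly positive. -/
theorem denominator_pos
    (qm qp β Kp Km a1 : ℝ) (hqp : 0 < qp) (hq : qp < qm) (hβ : 0 < β)
    (hKp : Kp = qp + β) (hKm : Km = qm + β)
    (ha1 : a1 = (Km + Kp - Real.sqrt ((Km + Kp) ^ 2 - 4 * qm * qp)) / (2 * qm)) :
    ∀ n : ℕ, 2 ≤ n → 0 < Kp + (n : ℝ) * Km - ((n : ℝ) + 1) * qm * a1 := by
  intro n hn
  have hqm : 0 < qm := hqp.trans hq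
  set D := (Km + Kp) ^ 2 - 4 * qm * qp with hD
  have hDeq : D = (qm - qp) ^ 2 + 4 * β * (qm + qp + β) := by
    rw [hD, hKp, hKm]; ring
  have hDgt : (qm - qp) ^ 2 < D := by nlinarith
  have hsqrt : qm - qp < Real.sqrt D := by
    calc qm - qp = Real.sqrt ((qm - qp) ^ 2) := (Real.sqrt_sq (by linarith)).symm
    _ < Real.sqrt D := Real.sqrt_lt_sqrt (sq_nonneg _) hDgt
  have hsnn : 0 ≤ Real.sqrt D := Real.sqrt_nonneg D
  have hqa : qm * a1 = (Km + Kp - Real.sqrt D) / 2 := by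
    rw [ha1]; field_simp
  have h1 : qm * a1 < Kp := by
    rw [hqa]; linarith [hKp, hKm]
  have h2 : qm * a1 < Km := by
    rw [hqa]; linarith [hKp, hKm]
  have hn' : (2 : ℝ) ≤ (n : ℝ) := by exact_mod_cast hn
  nlinarith [mul_le_mul_of_nonneg_left h2.le (by linarith : (0:ℝ) ≤ (n:ℝ))]
end

section
/- With the sequence (aₙ) defined by a₀ = 0, a₁ = (K₋ + K₊ − √((K₋ + K₊)² − 4 q₋ q₊)) / (2 q₋), and aₙ = [β ∑_{k=1}^{n−1} aₖ a_{n−k} + q₋ ∑_{k=1}^{n−2} (k+1) a_{k+1} a_{n−k} + β (n−1) a_{n−1}] / (K₊ + n K₋ − (n+1) q₋ a₁) for n ≥ 2, set A_N(y) = ∑_{n=0}^N aₙ yⁿ. Then for every N ≥ 1 and every y with 0 < y < 1, one has −q₊ y − β A_N(y)² + K₊ A_N(y) ≤ A_N'(y) · (q₋ A_N(y) + β y² − K₋ y), where A_N' is the derivative of the polynomial A_N. -/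
/-- Index-shift lemma for the `q₋ A' A` sum. -/
theorem psi_sum_shift (a : ℕ → ℝ) (ha0 : a 0 = 0) (n : ℕ) :
    (∑ k ∈ Finset.range (n+2+1), ((k:ℝ)+1) * a (k+1) * a (n+2-k))
    = (∑ k ∈ Finset.Icc 1 n, ((k:ℝ)+1) * a (k+1) * a (n+2-k))
      + a 1 * a (n+2) + ((n:ℝ)+2) * a (n+2) * a 1 := by
  have hIcc : (∑ k ∈ Finset.Icc 1 n, ((k:ℝ)+1) * a (k+1) * a (n+2-k))
      = ∑ k ∈ Finset.range n, ((k:ℝ)+1+1) * a (k+1+1) * a (n+1-k) := by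
    rw [← Finset.Ico_add_one_right_eq_Icc, Finset.sum_Ico_eq_sum_range]
    apply Finset.sum_congr (by norm_num)
    intro k hk
    have h1 : 1 + k = k + 1 := by omega
    rw [h1]
    have h2 : n + 2 - (k + 1) = n + 1 - k := by omega
    rw [h2]
    push_cast
    ring
  rw [Finset.sum_range_succ, Finset.sum_range_succ, Finset.sum_range_succ', hIcc]
  simp only [ha0, Nat.succ_sub_succ, Nat.add_sub_cancel, mul_zero, add_zero, Nat.sub_self,
    Nat.add_sub_cancel_left, Nat.cast_zero, zero_add, one_mul, Nat.cast_add, Nat.cast_one,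
    Nat.sub_zero]
  ring

/-- Index-shift lemma for the `β A²` sum. -/
theorem psi_sum_shift2 (a : ℕ → ℝ) (ha0 : a 0 = 0) (n : ℕ) :
    (∑ k ∈ Finset.range (n+2+1), a k * a (n+2-k))
    = ∑ k ∈ Finset.Icc 1 (n+1), a k * a (n+2-k) := by
  have hIcc : (∑ k ∈ Finset.Icc 1 (n+1), a k * a (n+2-k))
      = ∑ k ∈ Finset.range (n+1), a (k+1) * a (n+1-k) := by
    rw [← Finset.Ico_add_one_right_eq_Icc, Finset.sum_Ico_eq_sum_range]
    apply Finset.sum_congr (by norm_num)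
    intro k hk
    have h1 : 1 + k = k + 1 := by omega
    rw [h1]
    have h2 : n + 2 - (k + 1) = n + 1 - k := by omega
    rw [h2]
  rw [Finset.sum_range_succ, Finset.sum_range_succ', hIcc]
  simp [ha0]

/-- Inequality (3.2): for the partial sums `A_N(y) = ∑_{n=0}^N aₙ yⁿ`, for every
`N ≥ 1` and `0 < y < 1`,
`−q₊ y − β A_N(y)² + K₊ A_N(y) ≤ A_N'(y)(q₋ A_N(y) + β y² − K₋ y)`. -/
theorem partial_sum_inequality
    (qm qp β Kp Km a1 : ℝ) (hqp : 0 < qp) (hq : qp < qm) (hβ : 0 < β)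
    (hKp : Kp = qp + β) (hKm : Km = qm + β)
    (ha1 : a1 = (Km + Kp - Real.sqrt ((Km + Kp) ^ 2 - 4 * qm * qp)) / (2 * qm))
    (a : ℕ → ℝ) (ha0 : a 0 = 0) (ha1' : a 1 = a1)
    (harec : ∀ n : ℕ, 2 ≤ n → a n =
      (β * ∑ k ∈ Finset.Icc 1 (n - 1), a k * a (n - k)
        + qm * ∑ k ∈ Finset.Icc 1 (n - 2), ((k : ℝ) + 1) * a (k + 1) * a (n - k)
        + β * ((n : ℝ) - 1) * a (n - 1))
      / (Kp + (n : ℝ) * Km - ((n : ℝ) + 1) * qm * a1)) :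
    ∀ N : ℕ, 1 ≤ N → ∀ y : ℝ, 0 < y → y < 1 →
      -qp * y - β * (∑ n ∈ Finset.range (N + 1), a n * y ^ n) ^ 2
        + Kp * (∑ n ∈ Finset.range (N + 1), a n * y ^ n)
      ≤ deriv (fun t : ℝ => ∑ n ∈ Finset.range (N + 1), a n * t ^ n) y
          * (qm * (∑ n ∈ Finset.range (N + 1), a n * y ^ n) + β * y ^ 2 - Km * y) := by
  intro N hN y hy0 hy1
  have hqm : 0 < qm := lt_trans hqp hq
  have hd0 : 0 ≤ (Km + Kp) ^ 2 - 4 * qm * qp := by nlinarith [sq_nonneg (Km - Kp)]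
  set s := Real.sqrt ((Km + Kp) ^ 2 - 4 * qm * qp) with hs
  have hsq : s ^ 2 = (Km + Kp) ^ 2 - 4 * qm * qp := Real.sq_sqrt hd0
  have hsnn : 0 ≤ s := Real.sqrt_nonneg _
  have hsle : s ≤ Km + Kp := by
    have : s ≤ Real.sqrt ((Km + Kp)^2) := Real.sqrt_le_sqrt (by nlinarith)
    rwa [Real.sqrt_sq (by nlinarith)] at this
  have hma : qm * a1 = (Km + Kp - s)/2 := by rw [ha1]; field_simp
  have hquad : qm * a1^2 - (Km+Kp)*a1 + qp = 0 := by
    rw [ha1]; field_simp; nlinarith [hsq]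
  have ha1nn : 0 ≤ a1 := by
    rw [ha1]; exact div_nonneg (by linarith) (by linarith)
  have hKpKm : Kp < Km := by rw [hKp, hKm]; linarith
  have hDpos : ∀ n : ℕ, 2 ≤ n → 0 < Kp + (n:ℝ) * Km - ((n:ℝ) + 1) * qm * a1 := by
    intro n hn
    have hn2 : (2:ℝ) ≤ (n:ℝ) := by exact_mod_cast hn
    nlinarith [hma]
  -- nonnegativity of the sequence
  have hann : ∀ n, 0 ≤ a n := by
    intro n
    induction n using Nat.strong_induction_on with
    | _ n ih =>
      match n with
      | 0 => rw [ha0]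
      | 1 => rw [ha1']; exact ha1nn
      | (n+2) =>
        rw [harec (n+2) (by omega)]
        apply div_nonneg
        · have h1 : (0:ℝ) ≤ ∑ k ∈ Finset.Icc 1 (n+2-1), a k * a (n+2-k) := by
            apply Finset.sum_nonneg
            intro k hk
            simp only [Finset.mem_Icc] at hk
            exact mul_nonneg (ih k (by omega)) (ih (n+2-k) (by omega))
          have h2 : (0:ℝ) ≤ ∑ k ∈ Finset.Icc 1 (n+2-2), ((k:ℝ)+1) * a (k+1) * a (n+2-k) := by
            apply Finset.sum_nonneg
            intro k hk
            simp only [Finset.mem_Icc] at hk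
            exact mul_nonneg (mul_nonneg (by positivity) (ih (k+1) (by omega)))
              (ih (n+2-k) (by omega))
          have h3 : (0:ℝ) ≤ ((n+2:ℕ):ℝ) - 1 := by push_cast; linarith
          have h4 := ih (n+2-1) (by omega)
          positivity
        · exact le_of_lt (hDpos (n+2) (by omega))
  -- the key coefficient identity
  have hstar : ∀ m : ℕ,
      qm * (∑ k ∈ Finset.range (m+1), ((k:ℝ)+1) * a (k+1) * a (m-k))
      + β * (∑ k ∈ Finset.range (m+1), a k * a (m-k))
      + β * ((m:ℝ)-1) * a (m-1) - Km * (m:ℝ) * a m - Kp * a m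
      + (if m = 1 then qp else 0) = 0 := by
    intro m
    match m with
    | 0 => simp [ha0]
    | 1 =>
      simp only [Finset.sum_range_succ, Finset.sum_range_zero, ha0, ha1']
      norm_num
      linear_combination hquad
    | (n+2) =>
      have hD := hDpos (n+2) (by omega)
      have hrec := harec (n+2) (by omega)
      rw [eq_div_iff (ne_of_gt hD)] at hrec
      rw [← ha1'] at hrec
      simp only [Nat.add_sub_cancel, show n+2-2 = n from rfl] at hrec
      push_cast at hrec
      rw [psi_sum_shift a ha0 n, psi_sum_shift2 a ha0 n]
      simp only [Nat.add_sub_cancel, show n+2-2 = n from rfl, if_neg (by omega : ¬ n+2 = 1)]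
      push_cast
      linear_combination -hrec
  -- the polynomial setup
  set p : Polynomial ℝ := ∑ n ∈ Finset.range (N+1), Polynomial.C (a n) * Polynomial.X ^ n
    with hp
  have hpc : ∀ i, p.coeff i = if i ≤ N then a i else 0 := by
    intro i
    rw [hp, Polynomial.finset_sum_coeff]
    simp only [Polynomial.coeff_C_mul, Polynomial.coeff_X_pow, mul_ite, mul_one, mul_zero]
    rw [Finset.sum_ite_eq (Finset.range (N+1)) i a]
    simp [Nat.lt_succ_iff]
  have hpe : ∀ t : ℝ, p.eval t = ∑ n ∈ Finset.range (N+1), a n * t^n := by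
    intro t
    rw [hp]
    simp [Polynomial.eval_finset_sum]
  have hdc : ∀ i, p.derivative.coeff i = if i+1 ≤ N then ((i:ℝ)+1) * a (i+1) else 0 := by
    intro i
    rw [Polynomial.coeff_derivative, hpc]
    split_ifs with h
    · push_cast; ring
    · simp
  have hpcnn : ∀ i, 0 ≤ p.coeff i := by
    intro i; rw [hpc]; split_ifs
    · exact hann i
    · exact le_refl 0
  have hdcnn : ∀ i, 0 ≤ p.derivative.coeff i := by
    intro i
    rw [hdc]
    split_ifs with h
    · exact mul_nonneg (by positivity) (hann (i+1))
    · exact le_refl 0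
  set Q : Polynomial ℝ :=
    Polynomial.C qm * (p.derivative * p) + Polynomial.C β * p.derivative * Polynomial.X^2
      - Polynomial.C Km * p.derivative * Polynomial.X + Polynomial.C qp * Polynomial.X
      + Polynomial.C β * (p * p) - Polynomial.C Kp * p with hQ
  have hQcoeff : ∀ m : ℕ, Q.coeff m =
      qm * (∑ k ∈ Finset.range (m+1), p.derivative.coeff k * p.coeff (m-k))
      + (if 2 ≤ m then β * p.derivative.coeff (m-2) else 0)
      - (if 1 ≤ m then Km * p.derivative.coeff (m-1) else 0)
      + (if m = 1 then qp else 0)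
      + β * (∑ k ∈ Finset.range (m+1), p.coeff k * p.coeff (m-k))
      - Kp * p.coeff m := by
    intro m
    have e1 : (Polynomial.C qm * (p.derivative * p)).coeff m
        = qm * (∑ k ∈ Finset.range (m+1), p.derivative.coeff k * p.coeff (m-k)) := by
      rw [Polynomial.coeff_C_mul, Polynomial.coeff_mul,
        Finset.Nat.sum_antidiagonal_eq_sum_range_succ_mk]
    have e2 : (Polynomial.C β * p.derivative * Polynomial.X^2).coeff m
        = (if 2 ≤ m then β * p.derivative.coeff (m-2) else 0) := by
      rw [mul_assoc, Polynomial.coeff_C_mul, Polynomial.coeff_mul_X_pow']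
      split_ifs with h <;> simp
    have e3 : (Polynomial.C Km * p.derivative * Polynomial.X).coeff m
        = (if 1 ≤ m then Km * p.derivative.coeff (m-1) else 0) := by
      rw [mul_assoc, Polynomial.coeff_C_mul, ← pow_one (Polynomial.X : Polynomial ℝ),
        Polynomial.coeff_mul_X_pow']
      split_ifs with h <;> simp
    have e4 : (Polynomial.C qp * Polynomial.X).coeff m
        = (if m = 1 then qp else 0) := by
      rw [Polynomial.coeff_C_mul, Polynomial.coeff_X]
      by_cases h : m = 1
      · rw [if_pos h.symm, if_pos h, mul_one]
      · rw [if_neg (fun hh => h hh.symm), if_neg h, mul_zero]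
    have e5 : (Polynomial.C β * (p * p)).coeff m
        = β * (∑ k ∈ Finset.range (m+1), p.coeff k * p.coeff (m-k)) := by
      rw [Polynomial.coeff_C_mul, Polynomial.coeff_mul,
        Finset.Nat.sum_antidiagonal_eq_sum_range_succ_mk]
    have e6 : (Polynomial.C Kp * p).coeff m = Kp * p.coeff m := Polynomial.coeff_C_mul p
    rw [hQ]
    simp only [Polynomial.coeff_add, Polynomial.coeff_sub, e1, e2, e3, e4, e5, e6]
  have hQnn : ∀ m : ℕ, 0 ≤ Q.coeff m := by
    intro m
    rcases le_or_gt m N with hm | hm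
    · -- coefficient vanishes by the recursion
      have c1 : (∑ k ∈ Finset.range (m+1), p.derivative.coeff k * p.coeff (m-k))
          = ∑ k ∈ Finset.range (m+1), ((k:ℝ)+1) * a (k+1) * a (m-k) := by
        apply Finset.sum_congr rfl
        intro k hk
        simp only [Finset.mem_range, Nat.lt_succ_iff] at hk
        rw [hdc, hpc]
        by_cases h : k + 1 ≤ N
        · rw [if_pos h, if_pos (by omega)]
        · have hkm : k = m := by omega
          have h0 : m - k = 0 := by omega
          rw [if_neg h, h0, ha0]
          simp
      have c2 : (∑ k ∈ Finset.range (m+1), p.coeff k * p.coeff (m-k))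
          = ∑ k ∈ Finset.range (m+1), a k * a (m-k) := by
        apply Finset.sum_congr rfl
        intro k hk
        simp only [Finset.mem_range, Nat.lt_succ_iff] at hk
        rw [hpc, hpc, if_pos (by omega), if_pos (by omega)]
      have c3 : (if 2 ≤ m then β * p.derivative.coeff (m-2) else 0)
          = β * ((m:ℝ)-1) * a (m-1) := by
        split_ifs with h
        · rw [hdc, if_pos (by omega)]
          have h1 : m - 2 + 1 = m - 1 := by omega
          have h2 : ((m-2:ℕ):ℝ) = (m:ℝ) - 2 := by
            rw [Nat.cast_sub (by omega)]; norm_num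
          rw [h1, h2]
          ring
        · interval_cases m
          · simp [ha0]
          · simp
      have c4 : (if 1 ≤ m then Km * p.derivative.coeff (m-1) else 0)
          = Km * (m:ℝ) * a m := by
        split_ifs with h
        · rw [hdc, if_pos (by omega)]
          have h1 : m - 1 + 1 = m := by omega
          have h2 : ((m-1:ℕ):ℝ) = (m:ℝ) - 1 := by
            rw [Nat.cast_sub (by omega)]; norm_num
          rw [h1, h2]
          ring
        · have : m = 0 := by omega
          simp [this, ha0]
      have c6 : p.coeff m = a m := by rw [hpc, if_pos hm]
      rw [hQcoeff m, c1, c2, c3, c4, c6]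
      have := hstar m
      linarith
    · -- coefficient is a sum of nonnegative terms
      have c3 : (0:ℝ) ≤ (if 2 ≤ m then β * p.derivative.coeff (m-2) else 0) := by
        split_ifs with h
        · exact mul_nonneg hβ.le (hdcnn _)
        · exact le_refl 0
      have c4 : (if 1 ≤ m then Km * p.derivative.coeff (m-1) else 0) = 0 := by
        rw [if_pos (by omega), hdc, if_neg (by omega)]
        simp
      have c5 : (if m = 1 then qp else 0) = 0 := by rw [if_neg (by omega)]
      have c6 : p.coeff m = 0 := by rw [hpc, if_neg (by omega)]
      rw [hQcoeff m, c4, c5, c6]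
      have s1 : (0:ℝ) ≤ ∑ k ∈ Finset.range (m+1), p.derivative.coeff k * p.coeff (m-k) :=
        Finset.sum_nonneg fun k _ => mul_nonneg (hdcnn k) (hpcnn (m-k))
      have s2 : (0:ℝ) ≤ ∑ k ∈ Finset.range (m+1), p.coeff k * p.coeff (m-k) :=
        Finset.sum_nonneg fun k _ => mul_nonneg (hpcnn k) (hpcnn (m-k))
      have := mul_nonneg hqm.le s1
      have := mul_nonneg hβ.le s2
      linarith
  have hQy : 0 ≤ Q.eval y := by
    rw [Polynomial.eval_eq_sum_range]
    exact Finset.sum_nonneg fun i _ => mul_nonneg (hQnn i) (pow_nonneg hy0.le i)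
  have hQev : Q.eval y = p.derivative.eval y * (qm * p.eval y + β * y^2 - Km * y)
      + qp * y + β * (p.eval y)^2 - Kp * p.eval y := by
    rw [hQ]
    simp only [Polynomial.eval_add, Polynomial.eval_sub, Polynomial.eval_mul,
      Polynomial.eval_C, Polynomial.eval_pow, Polynomial.eval_X]
    ring
  have hde : deriv (fun t : ℝ => ∑ n ∈ Finset.range (N + 1), a n * t ^ n) y
      = p.derivative.eval y := by
    have hfun : (fun t : ℝ => ∑ n ∈ Finset.range (N + 1), a n * t ^ n)
        = fun t : ℝ => p.eval t := by
      funext t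
      rw [hpe]
    rw [hfun]
    exact Polynomial.deriv (p := p)
  rw [hde, ← hpe y]
  rw [hQev] at hQy
  linarith
end

section
/- With the sequence (aₙ) defined by a₀ = 0, a₁ = (K₋ + K₊ − √((K₋ + K₊)² − 4 q₋ q₊)) / (2 q₋), and aₙ = [β ∑_{k=1}^{n−1} aₖ a_{n−k} + q₋ ∑_{k=1}^{n−2} (k+1) a_{k+1} a_{n−k} + β (n−1) a_{n−1}] / (K₊ + n K₋ − (n+1) q₋ a₁) for n ≥ 2, the series ∑_{n=0}^∞ aₙ is summable and its sum satisfies ∑_{n=0}^∞ aₙ ≤ q₊ / (q₋ + β). -/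
lemma a1_facts (qm qp β a1 : ℝ) (hqp : 0 < qp) (hq : qp < qm) (hβ : 0 < β)
    (ha1 : a1 = ((qm+β) + (qp+β) - Real.sqrt (((qm+β) + (qp+β)) ^ 2 - 4 * qm * qp)) / (2 * qm)) :
    0 ≤ a1 ∧ qm*a1^2 - ((qm+β)+(qp+β))*a1 + qp = 0 ∧ (qm+β)*a1 ≤ qp := by
  have hqm : 0 < qm := hqp.trans hq
  set s : ℝ := (qm+β)+(qp+β) with hs
  have hs0 : 0 < s := by positivity
  have hdisc : 0 ≤ s^2 - 4*qm*qp := by nlinarith [sq_nonneg (qm-qp)]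
  set d : ℝ := Real.sqrt (s^2 - 4*qm*qp) with hd
  have hd2 : d^2 = s^2 - 4*qm*qp := Real.sq_sqrt hdisc
  have hdnn : 0 ≤ d := Real.sqrt_nonneg _
  have hdle : d ≤ s := by
    rw [hd]
    calc Real.sqrt (s^2 - 4*qm*qp) ≤ Real.sqrt (s^2) := by
          apply Real.sqrt_le_sqrt; nlinarith
      _ = s := by rw [Real.sqrt_sq hs0.le]
  have ha1nn : 0 ≤ a1 := by
    rw [ha1]; apply div_nonneg (by linarith) (by linarith)
  have hquad : qm*a1^2 - s*a1 + qp = 0 := by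
    rw [ha1]; field_simp; nlinarith [hd2]
  have ht : 0 < (qm+β)*s - 2*qm*qp := by nlinarith
  have hKma1 : (qm+β)*a1 ≤ qp := by
    have h1 : 0 ≤ ((qm+β)*d)^2 - ((qm+β)*s - 2*qm*qp)^2 := by
      have he : ((qm+β)*d)^2 - ((qm+β)*s - 2*qm*qp)^2 = 4*qm*qp*(β*qm+β*qp+β^2) := by
        rw [mul_pow, hd2, hs]; ring
      rw [he]; positivity
    have hKd : 0 ≤ (qm+β)*d := mul_nonneg (by linarith) hdnn
    have key : (qm+β)*s - 2*qm*qp ≤ (qm+β)*d := by nlinarith [h1, ht, hKd]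
    rw [ha1, mul_div_assoc', div_le_iff₀ (by positivity)]
    nlinarith
  exact ⟨ha1nn, hquad, hKma1⟩


noncomputable def partS (a : ℕ → ℝ) (N : ℕ) : ℝ := ∑ k ∈ Finset.Icc 1 N, a k
noncomputable def partT (a : ℕ → ℝ) (N : ℕ) : ℝ := ∑ k ∈ Finset.Icc 1 N, (k:ℝ) * a k

lemma partS_zero (a : ℕ → ℝ) : partS a 0 = 0 := by simp [partS]
lemma partT_zero (a : ℕ → ℝ) : partT a 0 = 0 := by simp [partT]
lemma partS_succ (a : ℕ → ℝ) (N : ℕ) : partS a (N+1) = partS a N + a (N+1) :=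
  Finset.sum_Icc_succ_top (by omega) _
lemma partT_succ (a : ℕ → ℝ) (N : ℕ) :
    partT a (N+1) = partT a N + ((N+1:ℕ):ℝ) * a (N+1) :=
  Finset.sum_Icc_succ_top (by omega) _
lemma partS_one (a : ℕ → ℝ) : partS a 1 = a 1 := by simp [partS]
lemma partT_one (a : ℕ → ℝ) : partT a 1 = a 1 := by simp [partT]
lemma partS_mono (a : ℕ → ℝ) (hpos : ∀ n, 0 ≤ a n) {M N : ℕ} (h : M ≤ N) :
    partS a M ≤ partS a N := by
  apply Finset.sum_le_sum_of_subset_of_nonneg (Finset.Icc_subset_Icc_right h)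
  intro i _ _; exact hpos i
lemma partT_mono (a : ℕ → ℝ) (hpos : ∀ n, 0 ≤ a n) {M N : ℕ} (h : M ≤ N) :
    partT a M ≤ partT a N := by
  apply Finset.sum_le_sum_of_subset_of_nonneg (Finset.Icc_subset_Icc_right h)
  intro i _ _; exact mul_nonneg (by positivity) (hpos i)
lemma partS_le_partT (a : ℕ → ℝ) (hpos : ∀ n, 0 ≤ a n) (N : ℕ) :
    partS a N ≤ partT a N := by
  apply Finset.sum_le_sum
  intro i hi
  simp only [Finset.mem_Icc] at hi
  have h1 : (1:ℝ) ≤ (i:ℝ) := by exact_mod_cast hi.1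
  nlinarith [hpos i]
lemma sum_range_eq_partS (a : ℕ → ℝ) (ha0 : a 0 = 0) (n : ℕ) :
    ∑ i ∈ Finset.range n, a i = partS a (n-1) := by
  induction n with
  | zero => simp [partS]
  | succ m ih =>
    rw [Finset.sum_range_succ, ih]
    cases m with
    | zero => simp [partS, ha0]
    | succ l => simp only [Nat.add_sub_cancel]; rw [partS_succ]

lemma key_identity (qm qp β a1 : ℝ) (a : ℕ → ℝ) (ha1' : a 1 = a1)
    (hquad : qm*a1^2 - ((qm+β)+(qp+β))*a1 + qp = 0)
    (hrecm : ∀ N : ℕ, 1 ≤ N →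
      ((qp+β) + ((N:ℝ)+1)*(qm+β)) * a (N+1) =
        β * (∑ k ∈ Finset.Icc 1 N, a k * a (N+1-k))
        + qm * (∑ k ∈ Finset.Icc 1 (N-1), ((k:ℝ)+1) * a (k+1) * a (N+1-k))
        + β * (N:ℝ) * a N + ((N:ℝ)+2) * qm * a1 * a (N+1)) :
    ∀ N : ℕ, 1 ≤ N →
      (qp+β) * partS a N + (qm+β) * partT a N =
        β * (∑ m ∈ Finset.Icc 1 N, a m * partS a (N-m))
        + qm * (∑ m ∈ Finset.Icc 1 N, a m * partT a (N+1-m))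
        + β * partT a (N-1) + qp := by
  intro N
  induction N with
  | zero => omega
  | succ n ih =>
    intro _
    rcases Nat.eq_zero_or_pos n with hn | hn
    · subst hn
      norm_num [partS_one, partT_one, partS_zero, partT_zero, Finset.Icc_self,
        Finset.sum_singleton, ha1']
      linear_combination -hquad
    · -- n ≥ 1
      have ihn := ih hn
      -- expand sums at n+1
      have E1 : (∑ m ∈ Finset.Icc 1 (n+1), a m * partS a (n+1-m))
          = (∑ m ∈ Finset.Icc 1 n, a m * partS a (n-m))
            + (∑ m ∈ Finset.Icc 1 n, a m * a (n+1-m)) := by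
        rw [Finset.sum_Icc_succ_top (by omega)]
        simp only [Nat.sub_self, partS_zero, mul_zero, add_zero]
        rw [← Finset.sum_add_distrib]
        apply Finset.sum_congr rfl
        intro m hm
        simp only [Finset.mem_Icc] at hm
        have h1 : n+1-m = (n-m)+1 := by omega
        rw [h1, partS_succ]
        ring
      have E2 : (∑ m ∈ Finset.Icc 1 (n+1), a m * partT a (n+1+1-m))
          = (∑ m ∈ Finset.Icc 1 n, a m * partT a (n+1-m))
            + (∑ m ∈ Finset.Icc 1 n, a m * (((n+2-m:ℕ):ℝ) * a (n+2-m)))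
            + a (n+1) * a 1 := by
        rw [Finset.sum_Icc_succ_top (by omega)]
        have h2 : n+1+1-(n+1) = 1 := by omega
        rw [h2, partT_one]
        congr 1
        rw [← Finset.sum_add_distrib]
        apply Finset.sum_congr rfl
        intro m hm
        simp only [Finset.mem_Icc] at hm
        have h1 : n+1+1-m = (n+1-m)+1 := by omega
        have h3 : n+1-m+1 = n+2-m := by omega
        rw [h1, partT_succ, h3]
        ring
      have E3' : (∑ m ∈ Finset.Ioc 1 n, a m * (((n+2-m:ℕ):ℝ) * a (n+2-m)))
          = (∑ k ∈ Finset.Icc 1 (n-1), ((k:ℝ)+1) * a (k+1) * a (n+1-k)) := by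
        apply Finset.sum_nbij' (fun m => n+1-m) (fun k => n+1-k)
        · intro m hm
          simp only [Finset.mem_Ioc] at hm
          simp only [Finset.mem_Icc]
          omega
        · intro k hk
          simp only [Finset.mem_Icc] at hk
          simp only [Finset.mem_Ioc]
          omega
        · intro m hm
          simp only [Finset.mem_Ioc] at hm
          omega
        · intro k hk
          simp only [Finset.mem_Icc] at hk
          omega
        · intro m hm
          simp only [Finset.mem_Ioc] at hm
          have h5 : n+2-m = (n+1-m)+1 := by omega
          have h6 : n+1-(n+1-m) = m := by omega
          rw [h5, h6]
          push_cast
          ring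
      have E3 : (∑ m ∈ Finset.Icc 1 n, a m * (((n+2-m:ℕ):ℝ) * a (n+2-m)))
          = a 1 * (((n+1:ℕ):ℝ) * a (n+1))
            + (∑ k ∈ Finset.Icc 1 (n-1), ((k:ℝ)+1) * a (k+1) * a (n+1-k)) := by
        rw [← Finset.add_sum_erase _ _ (show 1 ∈ Finset.Icc 1 n from Finset.mem_Icc.2 ⟨le_refl 1, hn⟩),
          Finset.Icc_erase_left, E3', show n+2-1 = n+1 by omega]
      have hTsplit : partT a n = partT a (n-1) + (n:ℝ) * a n := by
        have h7 : n - 1 + 1 = n := by omega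
        have := partT_succ a (n-1)
        rw [h7] at this
        rw [this]
      have hrec := hrecm n hn
      rw [partS_succ, partT_succ, E1, E2, E3]
      rw [show n+1-1 = n by omega]
      rw [ha1']
      push_cast
      linear_combination ihn + hrec - β*hTsplit

lemma Y_bound (qm qp β a1 : ℝ) (a : ℕ → ℝ) (hqp : 0 < qp) (hqm : 0 < qm) (hβ : 0 < β)
    (hpos : ∀ n, 0 ≤ a n) (ha1' : a 1 = a1) (ha1nn : 0 ≤ a1) (ha1lt1 : a1 < 1)
    (key : ∀ N : ℕ, 1 ≤ N →
      (qp+β) * partS a N + (qm+β) * partT a N =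
        β * (∑ m ∈ Finset.Icc 1 N, a m * partS a (N-m))
        + qm * (∑ m ∈ Finset.Icc 1 N, a m * partT a (N+1-m))
        + β * partT a (N-1) + qp) :
    ∀ N : ℕ, 1 ≤ N → qm * partT a N + β * partS a N ≤ qp := by
  intro N
  induction N using Nat.strong_induction_on with
  | _ N ih =>
    intro hN
    have hk := key N hN
    have h1N : 1 ∈ Finset.Icc 1 N := Finset.mem_Icc.2 ⟨le_refl 1, hN⟩
    have hB : β * (∑ m ∈ Finset.Icc 1 N, a m * partS a (N-m))
        + qm * (∑ m ∈ Finset.Icc 1 N, a m * partT a (N+1-m))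
        = ∑ m ∈ Finset.Icc 1 N, a m * (β * partS a (N-m) + qm * partT a (N+1-m)) := by
      rw [Finset.mul_sum, Finset.mul_sum, ← Finset.sum_add_distrib]
      exact Finset.sum_congr rfl (fun m _ => by ring)
    have hsplit : ∑ m ∈ Finset.Icc 1 N, a m * (β * partS a (N-m) + qm * partT a (N+1-m))
        = a 1 * (β * partS a (N-1) + qm * partT a N)
          + ∑ m ∈ Finset.Ioc 1 N, a m * (β * partS a (N-m) + qm * partT a (N+1-m)) := by
      rw [← Finset.add_sum_erase _ _ h1N, Finset.Icc_erase_left,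
        show N+1-1 = N by omega]
    have hfirst : a1 * (β * partS a (N-1) + qm * partT a N)
        ≤ a1 * (β * partS a N + qm * partT a N) := by
      apply mul_le_mul_of_nonneg_left _ ha1nn
      have := mul_le_mul_of_nonneg_left (partS_mono a hpos (show N-1 ≤ N by omega)) hβ.le
      linarith
    have hrest : ∑ m ∈ Finset.Ioc 1 N, a m * (β * partS a (N-m) + qm * partT a (N+1-m))
        ≤ ∑ m ∈ Finset.Ioc 1 N, a m * qp := by
      apply Finset.sum_le_sum
      intro m hm
      simp only [Finset.mem_Ioc] at hm
      apply mul_le_mul_of_nonneg_left _ (hpos m)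
      have hle : N+1-m < N := by omega
      have hge : 1 ≤ N+1-m := by omega
      have hIH := ih (N+1-m) hle hge
      have hmono := mul_le_mul_of_nonneg_left (partS_mono a hpos (show N-m ≤ N+1-m by omega)) hβ.le
      linarith
    have hsum1 : ∑ m ∈ Finset.Ioc 1 N, a m * qp = (partS a N - a 1) * qp := by
      rw [← Finset.sum_mul]
      congr 1
      have := Finset.add_sum_erase _ a h1N
      rw [Finset.Icc_erase_left] at this
      have : partS a N = a 1 + ∑ m ∈ Finset.Ioc 1 N, a m := by
        rw [partS, ← this]
      linarith
    have hTm : partT a (N-1) ≤ partT a N := partT_mono a hpos (by omega)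
    rw [hB, hsplit] at hk
    rw [ha1'] at hk hsum1
    have h9 : (qm * partT a N + β * partS a N) - a1 * (qm * partT a N + β * partS a N)
        ≤ qp - a1 * qp := by nlinarith [hk, hfirst, hrest, hsum1, hTm]
    nlinarith [h9, ha1lt1]

/-- Result (3.1): the series `∑ aₙ` is summable with sum at most `q₊/(q₋+β)`. -/
theorem sum_le_ratio
    (qm qp β Kp Km a1 : ℝ) (hqp : 0 < qp) (hq : qp < qm) (hβ : 0 < β)
    (hKp : Kp = qp + β) (hKm : Km = qm + β)
    (ha1 : a1 = (Km + Kp - Real.sqrt ((Km + Kp) ^ 2 - 4 * qm * qp)) / (2 * qm))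
    (a : ℕ → ℝ) (ha0 : a 0 = 0) (ha1' : a 1 = a1)
    (harec : ∀ n : ℕ, 2 ≤ n → a n =
      (β * ∑ k ∈ Finset.Icc 1 (n - 1), a k * a (n - k)
        + qm * ∑ k ∈ Finset.Icc 1 (n - 2), ((k : ℝ) + 1) * a (k + 1) * a (n - k)
        + β * ((n : ℝ) - 1) * a (n - 1))
      / (Kp + (n : ℝ) * Km - ((n : ℝ) + 1) * qm * a1)) :
    Summable a ∧ ∑' n : ℕ, a n ≤ qp / (qm + β) := by
  subst hKp hKm
  have hqm : 0 < qm := hqp.trans hq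
  obtain ⟨ha1nn, hquad, hKma1⟩ := a1_facts qm qp β a1 hqp hq hβ ha1
  have ha1lt1 : a1 < 1 := by nlinarith
  have hqma1 : qm * a1 ≤ qp := by nlinarith
  -- denominators are positive
  have hD : ∀ n : ℕ, 1 ≤ n →
      0 < (qp+β) + (n:ℝ)*(qm+β) - ((n:ℝ)+1)*qm*a1 := by
    intro n hn
    have h1 : (0:ℝ) ≤ (n:ℝ) := Nat.cast_nonneg n
    have h2 : qm*a1 ≤ qm + β := by linarith
    have h3 : (n:ℝ)*(qm*a1) ≤ (n:ℝ)*(qm+β) := mul_le_mul_of_nonneg_left h2 h1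
    nlinarith [h3, hqma1, hβ]
  -- nonnegativity of a
  have hpos : ∀ n, 0 ≤ a n := by
    intro n
    induction n using Nat.strong_induction_on with
    | _ n ih =>
      match n, ih with
      | 0, _ => rw [ha0]
      | 1, _ => rw [ha1']; exact ha1nn
      | (m+2), ih =>
        rw [harec (m+2) (by omega)]
        apply div_nonneg
        · have t1 : 0 ≤ ∑ k ∈ Finset.Icc 1 (m+1), a k * a (m+2-k) := by
            apply Finset.sum_nonneg
            intro k hk
            simp only [Finset.mem_Icc] at hk
            exact mul_nonneg (ih k (by omega)) (ih (m+2-k) (by omega))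
          have t2 : 0 ≤ ∑ k ∈ Finset.Icc 1 m, ((k:ℝ)+1) * a (k+1) * a (m+2-k) := by
            apply Finset.sum_nonneg
            intro k hk
            simp only [Finset.mem_Icc] at hk
            exact mul_nonneg (mul_nonneg (by positivity) (ih (k+1) (by omega))) (ih (m+2-k) (by omega))
          have t3 : 0 ≤ β * ((m:ℝ) + 2 - 1) * a (m+1) := by
            have h4 : 0 ≤ a (m+1) := ih (m+1) (by omega)
            have h5 : (0:ℝ) ≤ (m:ℝ) + 2 - 1 := by
              have := Nat.cast_nonneg (α := ℝ) m; linarith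
            exact mul_nonneg (mul_nonneg hβ.le h5) h4
          push_cast
          linarith [mul_nonneg hβ.le t1, mul_nonneg hqm.le t2, t3]
        · have := hD (m+2) (by omega)
          push_cast at this ⊢
          linarith
  -- recursion in multiplied-out form
  have hrecm : ∀ N : ℕ, 1 ≤ N →
      ((qp+β) + ((N:ℝ)+1)*(qm+β)) * a (N+1) =
        β * (∑ k ∈ Finset.Icc 1 N, a k * a (N+1-k))
        + qm * (∑ k ∈ Finset.Icc 1 (N-1), ((k:ℝ)+1) * a (k+1) * a (N+1-k))
        + β * (N:ℝ) * a N + ((N:ℝ)+2) * qm * a1 * a (N+1) := by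
    intro N hN
    have h := harec (N+1) (by omega)
    have hDpos := hD (N+1) (by omega)
    rw [eq_div_iff (ne_of_gt hDpos)] at h
    have e1 : N+1-1 = N := by omega
    have e2 : N+1-2 = N-1 := by omega
    rw [e1, e2] at h
    push_cast at h ⊢
    linear_combination h
  have key := key_identity qm qp β a1 a ha1' hquad hrecm
  have hY := Y_bound qm qp β a1 a hqp hqm hβ hpos ha1' ha1nn ha1lt1 key
  have hKmS : ∀ N : ℕ, partS a N ≤ qp / (qm+β) := by
    intro N
    rcases Nat.eq_zero_or_pos N with h0 | h0
    · subst h0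
      rw [partS_zero]
      positivity
    · rw [le_div_iff₀ (by positivity)]
      have h1 := hY N h0
      have h2 := partS_le_partT a hpos N
      nlinarith
  have hrange : ∀ n : ℕ, ∑ i ∈ Finset.range n, a i ≤ qp / (qm+β) := by
    intro n
    rw [sum_range_eq_partS a ha0]
    exact hKmS _
  exact ⟨summable_of_sum_range_le hpos hrange,
    Real.tsum_le_of_sum_range_le hpos hrange⟩
end

section
/- With the sequence (aₙ) defined by a₀ = 0, a₁ = (K₋ + K₊ − √((K₋ + K₊)² − 4 q₋ q₊)) / (2 q₋), and aₙ = [β ∑_{k=1}^{n−1} aₖ a_{n−k} + q₋ ∑_{k=1}^{n−2} (k+1) a_{k+1} a_{n−k} + β (n−1) a_{n−1}] / (K₊ + n K₋ − (n+1) q₋ a₁) for n ≥ 2, define A(y) = ∑_{n=0}^∞ aₙ yⁿ for 0 ≤ y ≤ 1. Then A(y) < y for every y with 0 < y < 1. -/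
open Finset

private lemma A_aux_conv1_le (p : ℕ → ℝ) (hp : ∀ k, 0 ≤ p k) (N : ℕ) :
    ∑ n ∈ Icc 2 N, ∑ k ∈ Icc 1 (n-1), p k * p (n-k)
      ≤ (∑ k ∈ Icc 1 N, p k) * (∑ k ∈ Icc 1 N, p k) := by
  rw [sum_sigma']
  rw [sum_mul_sum]
  have e1 : ∑ i ∈ Icc 1 N, ∑ j ∈ Icc 1 N, p i * p j
      = ∑ q ∈ Icc 1 N ×ˢ Icc 1 N, p q.1 * p q.2 := by
    rw [sum_product]
  rw [e1]
  have e2 : ∑ x ∈ (Icc 2 N).sigma (fun n => Icc 1 (n-1)), p x.2 * p (x.1 - x.2)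
      = ∑ q ∈ (Icc 1 N ×ˢ Icc 1 N).filter (fun q => q.1 + q.2 ≤ N), p q.1 * p q.2 := by
    refine sum_nbij' (fun x => (x.2, x.1 - x.2)) (fun q => ⟨q.1 + q.2, q.1⟩) ?_ ?_ ?_ ?_ ?_
    · intro x hx
      simp only [mem_sigma, mem_Icc, mem_filter, mem_product] at *
      omega
    · intro q hq
      simp only [mem_sigma, mem_Icc, mem_filter, mem_product] at *
      omega
    · intro x hx
      rcases x with ⟨n, k⟩
      have h : k + (n - k) = n := by simp at hx; omega
      simp [h]
    · intro q hq; simp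
    · intro x hx; rfl
  rw [e2]
  refine sum_le_sum_of_subset_of_nonneg (filter_subset _ _) ?_
  intro q _ _
  exact mul_nonneg (hp _) (hp _)

private lemma A_aux_conv2_le (p : ℕ → ℝ) (hp : ∀ k, 0 ≤ p k) (N : ℕ) :
    ∑ n ∈ Icc 2 N, ∑ k ∈ Icc 1 (n-2), ((k:ℝ)+1) * p (k+1) * p (n-k)
      ≤ (∑ j ∈ Icc 2 N, (j:ℝ) * p j) * (∑ m ∈ Icc 2 N, p m) := by
  rw [sum_sigma', sum_mul_sum]
  have e1 : ∑ i ∈ Icc 2 N, ∑ j ∈ Icc 2 N, ((i:ℝ) * p i) * p j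
      = ∑ q ∈ Icc 2 N ×ˢ Icc 2 N, ((q.1:ℝ) * p q.1) * p q.2 := by
    rw [sum_product]
  rw [e1]
  have e2 : ∑ x ∈ (Icc 2 N).sigma (fun n => Icc 1 (n-2)), ((x.2:ℝ)+1) * p (x.2+1) * p (x.1 - x.2)
      = ∑ q ∈ (Icc 2 N ×ˢ Icc 2 N).filter (fun q => q.1 + q.2 ≤ N+1),
          ((q.1:ℝ) * p q.1) * p q.2 := by
    refine sum_nbij' (fun x => (x.2+1, x.1 - x.2)) (fun q => ⟨q.1 + q.2 - 1, q.1 - 1⟩) ?_ ?_ ?_ ?_ ?_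
    · intro x hx
      simp only [mem_sigma, mem_Icc, mem_filter, mem_product] at *
      omega
    · intro q hq
      simp only [mem_sigma, mem_Icc, mem_filter, mem_product] at *
      omega
    · intro x hx
      rcases x with ⟨n, k⟩
      simp only [mem_sigma, mem_Icc] at hx
      have h1 : k + 1 + (n - k) - 1 = n := by omega
      have h2 : k + 1 - 1 = k := by omega
      simp [h1, h2]
    · intro q hq
      simp only [mem_filter, mem_product, mem_Icc] at hq
      have h1 : q.1 - 1 + 1 = q.1 := by omega
      have h2 : q.1 + q.2 - 1 - (q.1 - 1) = q.2 := by omega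
      simp [h1, h2]
    · intro x hx
      rcases x with ⟨n, k⟩
      push_cast
      ring
  rw [e2]
  refine sum_le_sum_of_subset_of_nonneg (filter_subset _ _) ?_
  intro q hq _
  have : (0:ℝ) ≤ (q.1 : ℝ) := Nat.cast_nonneg _
  exact mul_nonneg (mul_nonneg this (hp _)) (hp _)

private lemma A_aux_shift_le (p : ℕ → ℝ) (hp : ∀ k, 0 ≤ p k) (N : ℕ) :
    ∑ n ∈ Icc 2 N, ((n:ℝ)-1) * p (n-1) ≤ ∑ m ∈ Icc 1 N, (m:ℝ) * p m := by
  have e : ∑ n ∈ Icc 2 N, ((n:ℝ)-1) * p (n-1) = ∑ m ∈ Icc 1 (N-1), (m:ℝ) * p m := by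
    refine sum_nbij' (fun n => n - 1) (fun m => m + 1) ?_ ?_ ?_ ?_ ?_
    · intro n hn; simp only [mem_Icc] at *; omega
    · intro m hm; simp only [mem_Icc] at *; omega
    · intro n hn; simp only [mem_Icc] at hn; show n - 1 + 1 = n; omega
    · intro m hm; show m + 1 - 1 = m; omega
    · intro n hn
      simp only [mem_Icc] at hn
      have : ((n - 1 : ℕ) : ℝ) = (n:ℝ) - 1 := by
        rw [Nat.cast_sub (by omega)]; simp
      rw [this]
  rw [e]
  refine sum_le_sum_of_subset_of_nonneg (Icc_subset_Icc le_rfl (by omega)) ?_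
  intro m hm _
  exact mul_nonneg (Nat.cast_nonneg _) (hp _)

private lemma A_aux_per_n (qm β Kp Km a1 : ℝ) (a : ℕ → ℝ) (z : ℝ)
    (harec : ∀ n : ℕ, 2 ≤ n → a n =
      (β * ∑ k ∈ Finset.Icc 1 (n - 1), a k * a (n - k)
        + qm * ∑ k ∈ Finset.Icc 1 (n - 2), ((k : ℝ) + 1) * a (k + 1) * a (n - k)
        + β * ((n : ℝ) - 1) * a (n - 1))
      / (Kp + (n : ℝ) * Km - ((n : ℝ) + 1) * qm * a1))
    (n : ℕ) (hn : 2 ≤ n)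
    (hden : (0:ℝ) < Kp + (n : ℝ) * Km - ((n : ℝ) + 1) * qm * a1) :
    (Kp + (n:ℝ)*Km - ((n:ℝ)+1)*qm*a1) * (a n * z^n) * z =
      β * z * ∑ k ∈ Icc 1 (n-1), (a k * z^k) * (a (n-k) * z^(n-k))
      + qm * ∑ k ∈ Icc 1 (n-2), ((k:ℝ)+1) * (a (k+1) * z^(k+1)) * (a (n-k) * z^(n-k))
      + β * z^2 * (((n:ℝ)-1) * (a (n-1) * z^(n-1))) := by
  have h1 := harec n hn
  rw [eq_div_iff (ne_of_gt hden)] at h1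
  have h2 : (Kp + (n:ℝ)*Km - ((n:ℝ)+1)*qm*a1) * (a n * z^n) * z
      = (a n * (Kp + (n:ℝ)*Km - ((n:ℝ)+1)*qm*a1)) * z^(n+1) := by
    rw [pow_succ]; ring
  have e1 : (∑ k ∈ Icc 1 (n-1), a k * a (n-k)) * z^(n+1)
      = z * ∑ k ∈ Icc 1 (n-1), (a k * z^k) * (a (n-k) * z^(n-k)) := by
    rw [Finset.sum_mul, Finset.mul_sum]
    apply Finset.sum_congr rfl
    intro k hk
    simp only [mem_Icc] at hk
    have hkn : k + (n - k) = n := by omega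
    have hz : z^(n+1) = z * (z^k * z^(n-k)) := by
      rw [← pow_add, hkn, pow_succ]; ring
    rw [hz]; ring
  have e2 : (∑ k ∈ Icc 1 (n-2), ((k:ℝ)+1) * a (k+1) * a (n-k)) * z^(n+1)
      = ∑ k ∈ Icc 1 (n-2), ((k:ℝ)+1) * (a (k+1) * z^(k+1)) * (a (n-k) * z^(n-k)) := by
    rw [Finset.sum_mul]
    apply Finset.sum_congr rfl
    intro k hk
    simp only [mem_Icc] at hk
    have hkn : (k+1) + (n - k) = n + 1 := by omega
    have hz : z^(n+1) = z^(k+1) * z^(n-k) := by rw [← pow_add, hkn]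
    rw [hz]; ring
  have e3 : z^(n+1) = z^2 * z^(n-1) := by
    rw [← pow_add]
    congr 1
    omega
  rw [h2, h1]
  linear_combination β * e1 + qm * e2 + β * ((n:ℝ)-1) * a (n-1) * e3

private theorem A_aux_no_touch (qm qp β a1 : ℝ) (a : ℕ → ℝ) (z : ℝ)
    (hqm : 0 < qm) (hβ : 0 < β)
    (hE : qm * a1 < qp + β) (hD : qm * a1 < qm + β) (ha1pos : 0 < a1) (ha1lt : a1 < 1)
    (hquad : qm * a1^2 - ((qm+β) + (qp+β)) * a1 + qp = 0)
    (ha0 : a 0 = 0) (ha1' : a 1 = a1)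
    (hnn : ∀ n, 0 ≤ a n)
    (harec : ∀ n : ℕ, 2 ≤ n → a n =
      (β * ∑ k ∈ Finset.Icc 1 (n - 1), a k * a (n - k)
        + qm * ∑ k ∈ Finset.Icc 1 (n - 2), ((k : ℝ) + 1) * a (k + 1) * a (n - k)
        + β * ((n : ℝ) - 1) * a (n - 1))
      / ((qp+β) + (n : ℝ) * (qm+β) - ((n : ℝ) + 1) * qm * a1))
    (hz0 : 0 < z) (hz1 : z < 1)
    (hsum : HasSum (fun n => a n * z^n) z) : False := by
  have hp : ∀ k, 0 ≤ a k * z^k := fun k => mul_nonneg (hnn k) (pow_nonneg hz0.le k)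
  have hp0 : a 0 * z^0 = 0 := by simp [ha0]
  have hp1 : a 1 * z^1 = a1 * z := by simp [ha1']
  have hconv : ∀ M : ℕ, ∑ k ∈ range (M+1), a k * z^k = ∑ k ∈ Icc 1 M, a k * z^k := by
    intro M
    rw [Finset.sum_range_succ', hp0, add_zero]
    refine sum_nbij' (fun k => k + 1) (fun k => k - 1) ?_ ?_ ?_ ?_ ?_
    · intro k hk; simp only [mem_range, mem_Icc] at *; omega
    · intro k hk; simp only [mem_range, mem_Icc] at *; omega
    · intro k hk; show k + 1 - 1 = k; omega
    · intro k hk; simp only [mem_Icc] at hk; show k - 1 + 1 = k; omega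
    · intro k hk; rfl
  have hXle : ∀ M : ℕ, ∑ k ∈ Icc 1 M, a k * z^k ≤ z := by
    intro M
    rw [← hconv]
    exact sum_le_hasSum _ (fun i _ => hp i) hsum
  -- the master inequality
  have master : ∀ N : ℕ, 2 ≤ N →
      (∑ n ∈ Icc 2 N, (n:ℝ) * (a n * z^n)) * (β * (1 - z))
        ≤ β * z^2 + β * a1 * z^2 - ((qp+β) - qm*a1) * (∑ n ∈ Icc 2 N, a n * z^n) := by
    intro N hN
    have hVnn : (0:ℝ) ≤ ∑ n ∈ Icc 2 N, a n * z^n := sum_nonneg fun i _ => hp i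
    have hUnn : (0:ℝ) ≤ ∑ n ∈ Icc 2 N, (n:ℝ) * (a n * z^n) :=
      sum_nonneg fun i _ => mul_nonneg (Nat.cast_nonneg i) (hp i)
    have hicc : Icc 1 N = insert 1 (Icc 2 N) := by
      ext m; simp only [mem_Icc, mem_insert]; omega
    have h1nm : (1:ℕ) ∉ Icc 2 N := by simp
    have hXsplit : ∑ k ∈ Icc 1 N, a k * z^k = a1 * z + ∑ n ∈ Icc 2 N, a n * z^n := by
      rw [hicc, Finset.sum_insert h1nm, hp1]
    have hTsplit : ∑ k ∈ Icc 1 N, (k:ℝ) * (a k * z^k)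
        = a1 * z + ∑ n ∈ Icc 2 N, (n:ℝ) * (a n * z^n) := by
      rw [hicc, Finset.sum_insert h1nm]
      simp only [Nat.cast_one, one_mul, hp1]
    have hXz : a1 * z + ∑ n ∈ Icc 2 N, a n * z^n ≤ z := by
      rw [← hXsplit]; exact hXle N
    have hsum_id : ∑ n ∈ Icc 2 N, (((qp+β) + (n:ℝ)*(qm+β) - ((n:ℝ)+1)*qm*a1) * (a n * z^n) * z)
        = β * z * (∑ n ∈ Icc 2 N, ∑ k ∈ Icc 1 (n-1), (a k * z^k) * (a (n-k) * z^(n-k)))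
          + qm * (∑ n ∈ Icc 2 N, ∑ k ∈ Icc 1 (n-2), ((k:ℝ)+1) * (a (k+1) * z^(k+1)) * (a (n-k) * z^(n-k)))
          + β * z^2 * (∑ n ∈ Icc 2 N, ((n:ℝ)-1) * (a (n-1) * z^(n-1))) := by
      rw [Finset.mul_sum, Finset.mul_sum, Finset.mul_sum, ← Finset.sum_add_distrib,
        ← Finset.sum_add_distrib]
      apply Finset.sum_congr rfl
      intro n hn
      simp only [mem_Icc] at hn
      have hcast : (2:ℝ) ≤ (n:ℝ) := by exact_mod_cast hn.1
      have hden : (0:ℝ) < (qp+β) + (n:ℝ)*(qm+β) - ((n:ℝ)+1)*qm*a1 := by nlinarith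
      exact A_aux_per_n qm β (qp+β) (qm+β) a1 a z harec n hn.1 hden
    have hlhs : ∑ n ∈ Icc 2 N, (((qp+β) + (n:ℝ)*(qm+β) - ((n:ℝ)+1)*qm*a1) * (a n * z^n) * z)
        = z * (((qp+β) - qm*a1) * (∑ n ∈ Icc 2 N, a n * z^n)
            + ((qm+β) - qm*a1) * (∑ n ∈ Icc 2 N, (n:ℝ) * (a n * z^n))) := by
      have e : ∀ n ∈ Icc 2 N, ((qp+β) + (n:ℝ)*(qm+β) - ((n:ℝ)+1)*qm*a1) * (a n * z^n) * z
          = (z * ((qp+β) - qm*a1)) * (a n * z^n) + (z * ((qm+β) - qm*a1)) * ((n:ℝ) * (a n * z^n)) := by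
        intro n _; ring
      rw [Finset.sum_congr rfl e, Finset.sum_add_distrib, ← Finset.mul_sum, ← Finset.mul_sum]
      ring
    have hb1 : ∑ n ∈ Icc 2 N, ∑ k ∈ Icc 1 (n-1), (a k * z^k) * (a (n-k) * z^(n-k))
        ≤ z * z := by
      refine le_trans (A_aux_conv1_le (fun k => a k * z^k) hp N) ?_
      have h0 : (0:ℝ) ≤ ∑ k ∈ Icc 1 N, a k * z^k := sum_nonneg fun i _ => hp i
      exact mul_le_mul (hXle N) (hXle N) h0 hz0.le
    have hb2 : ∑ n ∈ Icc 2 N, ∑ k ∈ Icc 1 (n-2), ((k:ℝ)+1) * (a (k+1) * z^(k+1)) * (a (n-k) * z^(n-k))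
        ≤ (∑ n ∈ Icc 2 N, (n:ℝ) * (a n * z^n)) * (z - a1 * z) := by
      refine le_trans (A_aux_conv2_le (fun k => a k * z^k) hp N) ?_
      refine mul_le_mul_of_nonneg_left ?_ hUnn
      linarith
    have hb3 : ∑ n ∈ Icc 2 N, ((n:ℝ)-1) * (a (n-1) * z^(n-1))
        ≤ a1 * z + ∑ n ∈ Icc 2 N, (n:ℝ) * (a n * z^n) := by
      refine le_trans (A_aux_shift_le (fun k => a k * z^k) hp N) ?_
      rw [hTsplit]
    have hcomb : z * (((qp+β) - qm*a1) * (∑ n ∈ Icc 2 N, a n * z^n)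
            + ((qm+β) - qm*a1) * (∑ n ∈ Icc 2 N, (n:ℝ) * (a n * z^n)))
        ≤ β * z * (z * z) + qm * ((∑ n ∈ Icc 2 N, (n:ℝ) * (a n * z^n)) * (z - a1 * z))
          + β * z^2 * (a1 * z + ∑ n ∈ Icc 2 N, (n:ℝ) * (a n * z^n)) := by
      rw [← hlhs, hsum_id]
      have hβz : 0 ≤ β * z := mul_nonneg hβ.le hz0.le
      have hβz2 : 0 ≤ β * z^2 := mul_nonneg hβ.le (sq_nonneg z)
      gcongr
    refine le_of_mul_le_mul_left ?_ hz0
    nlinarith [hcomb, hUnn, hVnn, hz0]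
  set E := (qp+β) - qm*a1 with hEdef
  have hEpos : 0 < E := by rw [hEdef]; linarith
  set c := β * z^2 + β * a1 * z^2 - E * (z - a1*z) with hcdef
  have hgap : c < 0 := by
    have hids : E * (1 - a1) = β * (1 + a1) := by
      rw [hEdef]; nlinarith [hquad]
    have h2 : E * (z - a1*z) = β * (1+a1) * z := by
      have h3 : E * (z - a1 * z) = (E * (1 - a1)) * z := by ring
      rw [h3, hids]
    rw [hcdef, h2]
    nlinarith [mul_pos hβ hz0, mul_pos (mul_pos hβ hz0) (sub_pos.mpr hz1), ha1pos,
      mul_pos (mul_pos (mul_pos hβ hz0) (sub_pos.mpr hz1)) ha1pos]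
  have hlt : z + c/E < z := by
    have : c / E < 0 := div_neg_of_neg_of_pos hgap hEpos
    linarith
  have htend := hsum.tendsto_sum_nat
  have hev := htend.eventually (eventually_gt_nhds hlt)
  obtain ⟨M, hM1, hM2⟩ := (hev.and (Filter.eventually_ge_atTop 3)).exists
  set N := M - 1 with hNdef
  have hN : 2 ≤ N := by omega
  have hM : M = N + 1 := by omega
  rw [hM, hconv N] at hM1
  have hicc : Icc 1 N = insert 1 (Icc 2 N) := by
    ext m; simp only [mem_Icc, mem_insert]; omega
  have h1nm : (1:ℕ) ∉ Icc 2 N := by simp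
  have hXsplit : ∑ k ∈ Icc 1 N, a k * z^k = a1 * z + ∑ n ∈ Icc 2 N, a n * z^n := by
    rw [hicc, Finset.sum_insert h1nm]
    simp [ha1']
  have hUnn : (0:ℝ) ≤ ∑ n ∈ Icc 2 N, (n:ℝ) * (a n * z^n) :=
    sum_nonneg fun i _ => mul_nonneg (Nat.cast_nonneg i) (hp i)
  have hma := master N hN
  have hEV : β * z^2 + β * a1 * z^2 - E * (∑ n ∈ Icc 2 N, a n * z^n) < 0 := by
    have hV : z - a1*z + c/E < ∑ n ∈ Icc 2 N, a n * z^n := by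
      rw [hXsplit] at hM1; linarith
    have h4 := mul_lt_mul_of_pos_left hV hEpos
    rw [mul_add, mul_div_cancel₀ _ hEpos.ne'] at h4
    rw [hcdef] at h4
    linarith [h4]
  have hpos : (0:ℝ) ≤ (∑ n ∈ Icc 2 N, (n:ℝ) * (a n * z^n)) * (β * (1 - z)) :=
    mul_nonneg hUnn (mul_nonneg hβ.le (by linarith))
  linarith

private lemma A_aux_nonneg (qm qp β a1 : ℝ) (a : ℕ → ℝ)
    (hqm : 0 < qm) (hβ : 0 < β)
    (hE : qm * a1 < qp + β) (hD : qm * a1 < qm + β) (ha1pos : 0 < a1)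
    (ha0 : a 0 = 0) (ha1' : a 1 = a1)
    (harec : ∀ n : ℕ, 2 ≤ n → a n =
      (β * ∑ k ∈ Finset.Icc 1 (n - 1), a k * a (n - k)
        + qm * ∑ k ∈ Finset.Icc 1 (n - 2), ((k : ℝ) + 1) * a (k + 1) * a (n - k)
        + β * ((n : ℝ) - 1) * a (n - 1))
      / ((qp+β) + (n : ℝ) * (qm+β) - ((n : ℝ) + 1) * qm * a1)) :
    ∀ n, 0 ≤ a n := by
  intro n
  induction n using Nat.strong_induction_on with
  | _ n ih =>
    match n, ih with
    | 0, _ => rw [ha0]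
    | 1, _ => rw [ha1']; exact ha1pos.le
    | (m+2), ih =>
      set n := m + 2 with hn
      have hn2 : 2 ≤ n := by omega
      rw [harec n hn2]
      have hcast : (2:ℝ) ≤ (n:ℝ) := by exact_mod_cast hn2
      have hden : (0:ℝ) < (qp+β) + (n:ℝ)*(qm+β) - ((n:ℝ)+1)*qm*a1 := by nlinarith
      apply div_nonneg _ hden.le
      have h1 : (0:ℝ) ≤ ∑ k ∈ Finset.Icc 1 (n - 1), a k * a (n - k) := by
        apply sum_nonneg
        intro k hk
        simp only [mem_Icc] at hk
        exact mul_nonneg (ih k (by omega)) (ih (n-k) (by omega))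
      have h2' : (0:ℝ) ≤ ∑ k ∈ Finset.Icc 1 (n - 2), ((k : ℝ) + 1) * a (k + 1) * a (n - k) := by
        apply sum_nonneg
        intro k hk
        simp only [mem_Icc] at hk
        have : (0:ℝ) ≤ (k:ℝ) + 1 := by positivity
        exact mul_nonneg (mul_nonneg this (ih (k+1) (by omega))) (ih (n-k) (by omega))
      have h3 : (0:ℝ) ≤ ((n : ℝ) - 1) * a (n - 1) := by
        apply mul_nonneg (by linarith) (ih (n-1) (by omega))
      nlinarith [mul_nonneg hβ.le h1, mul_nonneg hqm.le h2', mul_nonneg hβ.le h3]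

set_option maxHeartbeats 1000000 in
/-- For `A(y) = ∑_{n=0}^∞ aₙ yⁿ`, one has `A(y) < y` for every `0 < y < 1`. -/
theorem A_lt_of_mem_Ioo
    (qm qp β Kp Km a1 : ℝ) (hqp : 0 < qp) (hq : qp < qm) (hβ : 0 < β)
    (hKp : Kp = qp + β) (hKm : Km = qm + β)
    (ha1 : a1 = (Km + Kp - Real.sqrt ((Km + Kp) ^ 2 - 4 * qm * qp)) / (2 * qm))
    (a : ℕ → ℝ) (ha0 : a 0 = 0) (ha1' : a 1 = a1)
    (harec : ∀ n : ℕ, 2 ≤ n → a n =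
      (β * ∑ k ∈ Finset.Icc 1 (n - 1), a k * a (n - k)
        + qm * ∑ k ∈ Finset.Icc 1 (n - 2), ((k : ℝ) + 1) * a (k + 1) * a (n - k)
        + β * ((n : ℝ) - 1) * a (n - 1))
      / (Kp + (n : ℝ) * Km - ((n : ℝ) + 1) * qm * a1)) :
    ∀ y : ℝ, 0 < y → y < 1 → (∑' n : ℕ, a n * y ^ n) < y := by
  subst hKp
  subst hKm
  intro y hy0 hy1
  by_cases hsum : Summable (fun n => a n * y ^ n)
  swap
  · rw [tsum_eq_zero_of_not_summable hsum]
    exact hy0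
  -- basic facts about a1
  have hqm : 0 < qm := hqp.trans hq
  set S : ℝ := (qm+β) + (qp+β) with hS
  set d : ℝ := S^2 - 4*qm*qp with hd
  have hdisc : 0 < d := by rw [hd]; nlinarith [sq_nonneg (qm - qp)]
  have hsg : 0 < Real.sqrt d := Real.sqrt_pos.mpr hdisc
  have hsq : (Real.sqrt d)^2 = d := Real.sq_sqrt hdisc.le
  have hSpos : 0 < S := by rw [hS]; positivity
  have h2 : 2 * qm * a1 = S - Real.sqrt d := by
    rw [ha1]
    field_simp
  have hltS : Real.sqrt d < S := by
    have h5 : d < S^2 := by rw [hd]; nlinarith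
    calc Real.sqrt d < Real.sqrt (S^2) := Real.sqrt_lt_sqrt hdisc.le h5
    _ = S := by rw [Real.sqrt_sq hSpos.le]
  have key : ∀ cc : ℝ, cc^2 < d → cc < Real.sqrt d := by
    intro cc hc
    rcases le_or_gt 0 cc with h0 | h0
    · exact (Real.lt_sqrt h0).mpr hc
    · exact h0.trans hsg
  have ha1lt : a1 < 1 := by
    have := key (S - 2*qm) (by rw [hd]; nlinarith)
    nlinarith
  have hE : qm * a1 < qp + β := by
    have := key (S - 2*(qp+β)) (by rw [hd]; nlinarith)
    nlinarith
  have hD : qm * a1 < qm + β := by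
    have := key (S - 2*(qm+β)) (by rw [hd]; nlinarith)
    nlinarith
  have ha1pos : 0 < a1 := by nlinarith
  have hquad : qm * a1^2 - ((qm+β) + (qp+β)) * a1 + qp = 0 := by
    have hSq : qm * a1^2 - S * a1 + qp = 0 := by nlinarith
    rw [hS] at hSq
    linarith [hSq]
  have hnn : ∀ n, 0 ≤ a n :=
    A_aux_nonneg qm qp β a1 a hqm hβ hE hD ha1pos ha0 ha1' harec
  -- shifted summability at y
  have hs1 : Summable (fun n => a (n+1) * y^n) := by
    have h1 : Summable (fun n => a (n+1) * y^(n+1)) :=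
      hsum.comp_injective (add_left_injective 1)
    refine (h1.mul_right y⁻¹).congr ?_
    intro n
    field_simp
    ring
  -- continuity of w on [0, y]
  have hcont : ContinuousOn (fun t : ℝ => ∑' n, a (n+1) * t^n) (Set.Icc 0 y) := by
    rw [continuousOn_iff_continuous_restrict]
    have he : (Set.Icc (0:ℝ) y).domRestrict (fun t : ℝ => ∑' n, a (n+1) * t^n)
        = fun t : Set.Icc (0:ℝ) y => ∑' n, a (n+1) * (t:ℝ)^n := rfl
    rw [he]
    apply continuous_tsum (u := fun n => a (n+1) * y^n)
    · intro i
      exact continuous_const.mul (continuous_subtype_val.pow i)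
    · exact hs1
    · intro n t
      rw [Real.norm_eq_abs, abs_mul, abs_of_nonneg (hnn (n+1)), abs_pow]
      have ht0 : (0:ℝ) ≤ (t:ℝ) := t.2.1
      have hty : (t:ℝ) ≤ y := t.2.2
      have hpow : |(t:ℝ)|^n ≤ y^n := by
        rw [abs_of_nonneg ht0]
        exact pow_le_pow_left₀ ht0 hty n
      exact mul_le_mul_of_nonneg_left hpow (hnn (n+1))
  have hw0 : (fun t : ℝ => ∑' n, a (n+1) * t^n) 0 = a1 := by
    simp only []
    rw [tsum_eq_single 0 (by intro b hb; simp [zero_pow hb])]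
    simp [ha1']
  -- main claim : w y < 1
  have hwy : (∑' n, a (n+1) * y^n) < 1 := by
    by_contra hge
    push_neg at hge
    have hIVT := intermediate_value_Icc hy0.le hcont
    have h1mem : (1:ℝ) ∈ Set.Icc ((fun t : ℝ => ∑' n, a (n+1) * t^n) 0)
        ((fun t : ℝ => ∑' n, a (n+1) * t^n) y) := by
      rw [hw0]
      exact ⟨ha1lt.le, hge⟩
    obtain ⟨z, hzmem, hwz⟩ := hIVT h1mem
    have hz0 : 0 < z := by
      rcases lt_or_eq_of_le hzmem.1 with h | h
      · exact h
      · exfalso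
        rw [← h] at hwz
        rw [hw0] at hwz
        linarith
    have hz1 : z < 1 := lt_of_le_of_lt hzmem.2 hy1
    -- summability at z
    have hsz : Summable (fun n => a n * z^n) := by
      refine Summable.of_nonneg_of_le (fun n => mul_nonneg (hnn n) (pow_nonneg hz0.le n))
        (fun n => ?_) hsum
      exact mul_le_mul_of_nonneg_left (pow_le_pow_left₀ hz0.le hzmem.2 n) (hnn n)
    -- the tsum at z equals z
    have htz : ∑' n, a n * z^n = z := by
      rw [Summable.tsum_eq_zero_add hsz, ha0]
      have he : ∀ n : ℕ, a (n+1) * z^(n+1) = z * (a (n+1) * z^n) := by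
        intro n; rw [pow_succ]; ring
      rw [tsum_congr he, tsum_mul_left]
      simp only [] at hwz
      rw [hwz]
      ring
    have hhs : HasSum (fun n => a n * z^n) z := by
      have h := hsz.hasSum
      rwa [htz] at h
    exact A_aux_no_touch qm qp β a1 a z hqm hβ hE hD ha1pos ha1lt hquad ha0 ha1' hnn
      harec hz0 hz1 hhs
  -- conclude
  have hfinal : ∑' n, a n * y^n = y * ∑' n, a (n+1) * y^n := by
    rw [Summable.tsum_eq_zero_add hsum, ha0]
    have he : ∀ n : ℕ, a (n+1) * y^(n+1) = y * (a (n+1) * y^n) := by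
      intro n; rw [pow_succ]; ring
    rw [tsum_congr he, tsum_mul_left]
    ring
  rw [hfinal]
  calc y * ∑' n, a (n+1) * y^n < y * 1 := by
        exact mul_lt_mul_of_pos_left hwy hy0
  _ = y := mul_one y
end

section
/- For every real μ, γ(μ) := −½(q₋ + q₊) + ½√((q₋ + q₊)² − 4(q₋ − q₊)μ + 4μ²) satisfies γ(μ) ≥ −½(√q₋ − √q₊)², with equality if and only if μ = ½(q₋ − q₊). In other words, the minimum over μ of the larger eigenvalue of the matrix with rows (−q₊ − μ, q₊) and (q₋, −q₋ + μ) is −½(√q₋ − √q₊)², attained at μ = ½(q₋ − q₊). -/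
/-- `γ(μ) = −½(q₋+q₊) + ½√((q₋+q₊)² − 4(q₋−q₊)μ + 4μ²)` satisfies
`γ(μ) ≥ −½(√q₋ − √q₊)²`, with equality iff `μ = ½(q₋ − q₊)`. -/
theorem gamma_min
    (qm qp : ℝ) (hqp : 0 < qp) (hq : qp < qm) :
    ∀ μ : ℝ,
      (-(1 / 2) * (qm + qp)
          + (1 / 2) * Real.sqrt ((qm + qp) ^ 2 - 4 * (qm - qp) * μ + 4 * μ ^ 2))
        ≥ -(1 / 2) * (Real.sqrt qm - Real.sqrt qp) ^ 2 ∧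
      ((-(1 / 2) * (qm + qp)
          + (1 / 2) * Real.sqrt ((qm + qp) ^ 2 - 4 * (qm - qp) * μ + 4 * μ ^ 2))
        = -(1 / 2) * (Real.sqrt qm - Real.sqrt qp) ^ 2 ↔ μ = (1 / 2) * (qm - qp)) := by
  intro μ
  have hqm : 0 < qm := hqp.trans hq
  have h4 : (0:ℝ) ≤ 4 * (qm * qp) := by positivity
  have hinner : (qm + qp) ^ 2 - 4 * (qm - qp) * μ + 4 * μ ^ 2
      = (2 * μ - (qm - qp)) ^ 2 + 4 * (qm * qp) := by ring
  have hinnernn : 0 ≤ (qm + qp) ^ 2 - 4 * (qm - qp) * μ + 4 * μ ^ 2 := by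
    rw [hinner]; positivity
  have hsq : Real.sqrt (4 * (qm * qp)) = 2 * (Real.sqrt qm * Real.sqrt qp) := by
    rw [show (4:ℝ) * (qm * qp) = (2 * (Real.sqrt qm * Real.sqrt qp)) ^ 2 by
      rw [mul_pow, mul_pow, Real.sq_sqrt hqm.le, Real.sq_sqrt hqp.le]; ring]
    exact Real.sqrt_sq (by positivity)
  have hmin : -(1 / 2) * (Real.sqrt qm - Real.sqrt qp) ^ 2
      = -(1 / 2) * (qm + qp) + (1 / 2) * Real.sqrt (4 * (qm * qp)) := by
    rw [hsq, sub_sq, Real.sq_sqrt hqm.le, Real.sq_sqrt hqp.le]; ring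
  have hle : Real.sqrt (4 * (qm * qp))
      ≤ Real.sqrt ((qm + qp) ^ 2 - 4 * (qm - qp) * μ + 4 * μ ^ 2) := by
    apply Real.sqrt_le_sqrt
    rw [hinner]
    nlinarith [sq_nonneg (2 * μ - (qm - qp))]
  refine ⟨by rw [hmin]; linarith, ?_, ?_⟩
  · intro h
    have heq : Real.sqrt ((qm + qp) ^ 2 - 4 * (qm - qp) * μ + 4 * μ ^ 2)
        = Real.sqrt (4 * (qm * qp)) := by
      rw [hmin] at h; linarith
    have heq2 : (qm + qp) ^ 2 - 4 * (qm - qp) * μ + 4 * μ ^ 2 = 4 * (qm * qp) :=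
      (Real.sqrt_inj hinnernn h4).mp heq
    have hz : (2 * μ - (qm - qp)) ^ 2 = 0 := by nlinarith
    have := pow_eq_zero_iff (n := 2) (by norm_num) |>.mp hz
    linarith
  · intro h
    subst h
    rw [hmin]
    congr 1
    congr 1
    rw [hinner]
    ring_nf
end

section
/- Let μ = ½(q₋ − q₊) and let M be the 2×2 real matrix with rows (−q₊ − μ, q₊) and (q₋, −q₋ + μ). Then there exists a constant C > 0 such that for all t ≥ 0, the operator norm of the matrix exponential exp(t • M) satisfies ‖exp(t • M)‖ ≤ C · e^{−β_c t}, where β_c = ½(√q₋ − √q₊)². -/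
attribute [local instance] Matrix.linftyOpNormedRing Matrix.linftyOpNormedAlgebra

set_option maxHeartbeats 1000000 in
/-- For `μ = ½(q₋ − q₊)` and `M` the matrix with rows `(−q₊ − μ, q₊)` and
`(q₋, −q₋ + μ)`, there is `C > 0` with `‖exp(tM)‖ ≤ C e^{−β_c t}` for all
`t ≥ 0`, where `β_c = ½(√q₋ − √q₊)²`. -/
theorem matrix_exp_decay
    (qm qp : ℝ) (hqp : 0 < qp) (hq : qp < qm) :
    ∃ C : ℝ, 0 < C ∧ ∀ t : ℝ, 0 ≤ t →
      ‖NormedSpace.exp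
          (t • (!![-qp - (1 / 2) * (qm - qp), qp;
                   qm, -qm + (1 / 2) * (qm - qp)] : Matrix (Fin 2) (Fin 2) ℝ))‖
        ≤ C * Real.exp (-((1 / 2) * (Real.sqrt qm - Real.sqrt qp) ^ 2) * t) := by
  have hqm : 0 < qm := hqp.trans hq
  set sp := Real.sqrt qp with hsp
  set sm := Real.sqrt qm with hsm
  have hsp0 : 0 < sp := Real.sqrt_pos.mpr hqp
  have hsm0 : 0 < sm := Real.sqrt_pos.mpr hqm
  have hsp2 : sp ^ 2 = qp := Real.sq_sqrt hqp.le
  have hsm2 : sm ^ 2 = qm := Real.sq_sqrt hqm.le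
  set s := sp * sm with hs
  have hs0 : 0 < s := mul_pos hsp0 hsm0
  set lp := -(qp + qm) / 2 + s with hlp
  set lm := -(qp + qm) / 2 - s with hlm
  set M : Matrix (Fin 2) (Fin 2) ℝ :=
    !![-qp - (1 / 2) * (qm - qp), qp; qm, -qm + (1 / 2) * (qm - qp)] with hM
  set P : Matrix (Fin 2) (Fin 2) ℝ := !![qp, qp; s, -s] with hP
  set Q : Matrix (Fin 2) (Fin 2) ℝ :=
    !![1 / (2 * qp), 1 / (2 * s); 1 / (2 * qp), -(1 / (2 * s))] with hQ
  have hs2 : s ^ 2 = qp * qm := by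
    rw [hs, mul_pow, hsp2, hsm2]
  have hPQ : P * Q = 1 := by
    rw [hP, hQ, Matrix.mul_fin_two, Matrix.one_fin_two]
    ext i j
    fin_cases i <;> fin_cases j <;> simp <;> field_simp <;> ring
  have hQP : Q * P = 1 := by
    rw [hP, hQ, Matrix.mul_fin_two, Matrix.one_fin_two]
    ext i j
    fin_cases i <;> fin_cases j <;> simp <;> field_simp <;> ring
  have hPunit : IsUnit P := ⟨⟨P, Q, hPQ, hQP⟩, rfl⟩
  have hPinv : P⁻¹ = Q := Matrix.inv_eq_right_inv hPQ
  clear_value sp sm s lp lm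
  have hdiagQ : ∀ x y : ℝ, (Matrix.diagonal ![x, y] : Matrix (Fin 2) (Fin 2) ℝ)
      = !![x, 0; 0, y] := by
    intro x y
    ext i j
    fin_cases i <;> fin_cases j <;> simp [Matrix.diagonal]
  have hconj : ∀ t : ℝ, t • M = P * Matrix.diagonal ![t * lp, t * lm] * P⁻¹ := by
    intro t
    rw [hPinv, hdiagQ, hP, hQ, hM, Matrix.mul_fin_two, Matrix.mul_fin_two]
    ext i j
    fin_cases i <;> fin_cases j <;>
      simp [hlp, hlm] <;> field_simp <;>
        first
          | ring1
          | linear_combination (4 * t) * hs2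
          | linear_combination (-4 * t) * hs2
          | linear_combination (2 * t) * hs2
          | linear_combination (-2 * t) * hs2
          | (rw [hsp2, hsm2]; ring)
          | (rw [show sp ^ 2 = qp from hsp2, show sm ^ 2 = qm from hsm2]; ring)
  have hbc : -((1 / 2) * (sm - sp) ^ 2) = lp := by
    rw [hlp, hs]; linear_combination (-1 / 2 : ℝ) * hsp2 + (-1 / 2 : ℝ) * hsm2
  refine ⟨‖P‖ * ‖Q‖, ?_, ?_⟩
  · have h1 : (1 : ℝ) ≤ ‖P‖ * ‖Q‖ := by
      calc (1 : ℝ) = ‖(1 : Matrix (Fin 2) (Fin 2) ℝ)‖ := norm_one.symm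
        _ = ‖P * Q‖ := by rw [hPQ]
        _ ≤ ‖P‖ * ‖Q‖ := norm_mul_le _ _
    linarith
  · intro t ht
    rw [hconj t, Matrix.exp_conj P _ hPunit, hPinv]
    have hdiag : NormedSpace.exp (Matrix.diagonal ![t * lp, t * lm])
        = Matrix.diagonal ![Real.exp (t * lp), Real.exp (t * lm)] := by
      rw [Matrix.exp_diagonal]
      congr 1 with i
      fin_cases i <;>
        simp [Matrix.diagonal, Pi.coe_exp, ← Real.exp_eq_exp_ℝ]
    rw [hdiag]
    have hlml : lm ≤ lp := by rw [hlp, hlm]; linarith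
    have hnd : ‖Matrix.diagonal ![Real.exp (t * lp), Real.exp (t * lm)]‖
        ≤ Real.exp (t * lp) := by
      rw [Matrix.linfty_opNorm_diagonal]
      apply pi_norm_le_iff_of_nonneg (Real.exp_pos _).le |>.mpr
      intro i
      fin_cases i <;> simp [Real.abs_exp, Real.exp_le_exp] <;> nlinarith [mul_le_mul_of_nonneg_left hlml ht]
    calc ‖P * Matrix.diagonal ![Real.exp (t * lp), Real.exp (t * lm)] * Q‖
        ≤ ‖P‖ * ‖Matrix.diagonal ![Real.exp (t * lp), Real.exp (t * lm)]‖ * ‖Q‖ := by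
          refine (norm_mul_le _ _).trans ?_
          gcongr
          exact norm_mul_le _ _
      _ ≤ ‖P‖ * Real.exp (t * lp) * ‖Q‖ := by
          gcongr
          try exact norm_nonneg _
      _ = ‖P‖ * ‖Q‖ * Real.exp (-((1 / 2) * (sm - sp) ^ 2) * t) := by
          rw [hbc]; ring_nf
end

section
/- Suppose 0 < β < β_c where β_c = ½(√q₋ − √q₊)². Let μ = ½(q₋ − q₊) and let M be the 2×2 real matrix with rows (−q₊ − μ, q₊) and (q₋, −q₋ + μ). Then there exist constants ε > 0, κ > 0 and C > 0 such that for all t ≥ 0, e^{(β + με) t} · ‖exp(t • M)‖ ≤ C · e^{−κ t}. (This is the matrix-exponential content of the large-deviation bound e^{βt} P^{±}[Φ_X(t) ≤ εt] ≤ C e^{−κt}.) -/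
set_option maxHeartbeats 1000000


attribute [local instance] Matrix.linftyOpNormedRing Matrix.linftyOpNormedAlgebra

/-- (Matrix-exponential form of Lemma 4.2.) If `0 < β < β_c = ½(√q₋ − √q₊)²`,
then with `μ = ½(q₋ − q₊)` and `M` the matrix with rows `(−q₊ − μ, q₊)`,
`(q₋, −q₋ + μ)`, there exist `ε, κ, C > 0` such that
`e^{(β + με)t} ‖exp(tM)‖ ≤ C e^{−κ t}` for all `t ≥ 0`. -/
theorem large_deviation_matrix_bound
    (qm qp β : ℝ) (hqp : 0 < qp) (hq : qp < qm) (hβ : 0 < β)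
    (hβc : β < (1 / 2) * (Real.sqrt qm - Real.sqrt qp) ^ 2) :
    ∃ ε κ C : ℝ, 0 < ε ∧ 0 < κ ∧ 0 < C ∧ ∀ t : ℝ, 0 ≤ t →
      Real.exp ((β + (1 / 2) * (qm - qp) * ε) * t) *
        ‖NormedSpace.exp
            (t • (!![-qp - (1 / 2) * (qm - qp), qp;
                     qm, -qm + (1 / 2) * (qm - qp)] : Matrix (Fin 2) (Fin 2) ℝ))‖
        ≤ C * Real.exp (-κ * t) := by
  set M : Matrix (Fin 2) (Fin 2) ℝ :=
    !![-qp - (1 / 2) * (qm - qp), qp; qm, -qm + (1 / 2) * (qm - qp)] with hM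
  have hqm : 0 < qm := hqp.trans hq
  set s : ℝ := Real.sqrt (qp * qm) with hsdef
  have hs0 : 0 < s := Real.sqrt_pos.2 (by positivity)
  have hs2 : s ^ 2 = qp * qm := Real.sq_sqrt (by positivity)
  set lp : ℝ := -(qp + qm) / 2 + s with hlp
  set lm : ℝ := -(qp + qm) / 2 - s with hlm
  -- βc
  set βc : ℝ := (1 / 2) * (Real.sqrt qm - Real.sqrt qp) ^ 2 with hβcdef
  have hsplit : s = Real.sqrt qp * Real.sqrt qm := Real.sqrt_mul (le_of_lt hqp) qm
  have hsqp : Real.sqrt qp ^ 2 = qp := Real.sq_sqrt hqp.le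
  have hsqm : Real.sqrt qm ^ 2 = qm := Real.sq_sqrt hqm.le
  have hlpβc : lp = -βc := by
    rw [hlp, hβcdef, hsplit]; nlinarith [hsqp, hsqm]
  set S : Matrix (Fin 2) (Fin 2) ℝ := !![qp, qp; s, -s] with hS
  have hdet : S.det = -(2 * qp * s) := by
    simp [hS, Matrix.det_fin_two_of]; ring
  have hUnit : IsUnit S.det := by
    rw [hdet]; exact (isUnit_iff_ne_zero).2 (by nlinarith)
  have hUnitS : IsUnit S := (Matrix.isUnit_iff_isUnit_det _).2 hUnit
  set D : Matrix (Fin 2) (Fin 2) ℝ := Matrix.diagonal ![lp, lm] with hD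
  have hMS : M * S = S * D := by
    ext i j
    fin_cases i <;> fin_cases j <;>
      simp [hM, hS, hD, Matrix.mul_apply, Fin.sum_univ_two, Matrix.diagonal] <;>
      nlinarith [hs2]
  have hMconj : M = S * D * S⁻¹ := by
    calc M = M * (S * S⁻¹) := by rw [Matrix.mul_nonsing_inv S hUnit, mul_one]
    _ = (M * S) * S⁻¹ := by rw [mul_assoc]
    _ = S * D * S⁻¹ := by rw [hMS]
  -- constants
  set κ : ℝ := (βc - β) / 2 with hκ
  have hκ0 : 0 < κ := by rw [hκ]; linarith
  set μ : ℝ := (1 / 2) * (qm - qp) with hμ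
  have hμ0 : 0 < μ := by rw [hμ]; linarith
  set ε : ℝ := κ / μ with hε
  have hε0 : 0 < ε := div_pos hκ0 hμ0
  set C : ℝ := ‖S‖ * ‖S⁻¹‖ with hC
  have hC1 : 1 ≤ C := by
    have h1 : (1 : ℝ) = ‖(S * S⁻¹ : Matrix (Fin 2) (Fin 2) ℝ)‖ := by
      rw [Matrix.mul_nonsing_inv S hUnit, norm_one]
    rw [hC, h1]; exact norm_mul_le _ _
  refine ⟨ε, κ, C, hε0, hκ0, lt_of_lt_of_le one_pos hC1, fun t ht => ?_⟩
  -- compute exp (t • M)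
  have hsmul : t • M = S * (Matrix.diagonal ![t * lp, t * lm]) * S⁻¹ := by
    rw [hMconj, ← Matrix.smul_mul, ← Matrix.mul_smul]
    have hd : t • D = Matrix.diagonal ![t * lp, t * lm] := by
      rw [hD, ← Matrix.diagonal_smul]
      congr 1
      funext i; fin_cases i <;> simp [smul_eq_mul]
    rw [hd]
  have hexp : NormedSpace.exp (t • M)
      = S * Matrix.diagonal (NormedSpace.exp ![t * lp, t * lm]) * S⁻¹ := by
    rw [hsmul, Matrix.exp_conj S (Matrix.diagonal ![t * lp, t * lm]) hUnitS, Matrix.exp_diagonal]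
  have hdiagnorm :
      ‖Matrix.diagonal (NormedSpace.exp ![t * lp, t * lm])‖ ≤ Real.exp (t * lp) := by
    rw [Matrix.linfty_opNorm_diagonal]
    have hpi : NormedSpace.exp ![t * lp, t * lm]
        = fun i => NormedSpace.exp (![t * lp, t * lm] i) := Pi.exp_def _
    rw [hpi]
    refine (pi_norm_le_iff_of_nonneg (Real.exp_pos _).le).2 fun i => ?_
    fin_cases i
    · show ‖NormedSpace.exp (![t * lp, t * lm] 0)‖ ≤ _
      simp [← Real.exp_eq_exp_ℝ, Real.norm_eq_abs, abs_of_pos (Real.exp_pos _)]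
    · show ‖NormedSpace.exp (![t * lp, t * lm] 1)‖ ≤ _
      simp only [← Real.exp_eq_exp_ℝ, Matrix.cons_val_one, Matrix.head_cons,
        Real.norm_eq_abs, abs_of_pos (Real.exp_pos _)]
      have hle : lm ≤ lp := by rw [hlp, hlm]; linarith
      exact Real.exp_le_exp.2 (mul_le_mul_of_nonneg_left hle ht)
  have hnorm : ‖NormedSpace.exp (t • M)‖ ≤ C * Real.exp (t * lp) := by
    rw [hexp, hC]
    calc ‖S * Matrix.diagonal (NormedSpace.exp ![t * lp, t * lm]) * S⁻¹‖
        ≤ ‖S * Matrix.diagonal (NormedSpace.exp ![t * lp, t * lm])‖ * ‖S⁻¹‖ :=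
          norm_mul_le _ _
      _ ≤ ‖S‖ * ‖Matrix.diagonal (NormedSpace.exp ![t * lp, t * lm])‖ * ‖S⁻¹‖ := by
          gcongr ?_ * _
          exact norm_mul_le _ _
      _ ≤ ‖S‖ * Real.exp (t * lp) * ‖S⁻¹‖ := by
          gcongr
      _ = ‖S‖ * ‖S⁻¹‖ * Real.exp (t * lp) := by ring
  have hexpkey : (β + μ * ε) + lp = -κ := by
    have : μ * ε = κ := by rw [hε]; field_simp
    rw [this, hlpβc, hκ]; ring
  calc Real.exp ((β + μ * ε) * t) * ‖NormedSpace.exp (t • M)‖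
      ≤ Real.exp ((β + μ * ε) * t) * (C * Real.exp (t * lp)) := by
        exact mul_le_mul_of_nonneg_left hnorm (Real.exp_pos _).le
    _ = C * Real.exp ((β + μ * ε) * t + t * lp) := by
        rw [Real.exp_add]; ring
    _ = C * Real.exp (((β + μ * ε) + lp) * t) := by ring_nf
    _ = C * Real.exp (-κ * t) := by rw [hexpkey]
end

section
/- Suppose β = β_c := ½(√q₋ − √q₊)², and set λ = ½(q₋ − q₊) and m = √(q₋/q₊). Then the functions b(φ) = e^{λφ} and c(φ) = m e^{λφ} satisfy b'(φ) = (β − q₊) b(φ) + q₊ c(φ) and c'(φ) = −q₋ b(φ) + (q₋ − β) c(φ) for all real φ, and the functions d(φ) = (1/m) e^{−λφ} and e(φ) = e^{−λφ} satisfy e'(φ) = (β − q₋) e(φ) + q₋ d(φ) and d'(φ) = −q₊ e(φ) + (q₊ − β) d(φ) for all real φ. (These are the explicit expectation formulas E⁺N⁺(φ) = e^{λφ}, E⁻N⁺(φ) = m e^{λφ}, E⁺N⁻(φ) = (1/m) e^{−λφ}, E⁻N⁻(φ) = e^{−λφ} of Theorem 4.4, expressed as solutions of the linear systems governed by the linearization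 matrix at (1,1).) -/
lemma deriv_exp_mul (c φ : ℝ) :
    deriv (fun ψ : ℝ => Real.exp (c * ψ)) φ = c * Real.exp (c * φ) := by
  have h : HasDerivAt (fun ψ : ℝ => Real.exp (c * ψ)) (Real.exp (c * φ) * c) φ := by
    simpa using ((hasDerivAt_id φ).const_mul c).exp
  simpa [mul_comm] using h.deriv

lemma deriv_const_mul_exp_mul (k c φ : ℝ) :
    deriv (fun ψ : ℝ => k * Real.exp (c * ψ)) φ = k * (c * Real.exp (c * φ)) := by
  have h : HasDerivAt (fun ψ : ℝ => k * Real.exp (c * ψ)) (k * (Real.exp (c * φ) * c)) φ := by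
    simpa using (((hasDerivAt_id φ).const_mul c).exp).const_mul k
  simpa [mul_comm] using h.deriv

/-- (Theorem 4.4.) At criticality `β = β_c = ½(√q₋ − √q₊)²`, with
`λ = ½(q₋ − q₊)` and `m = √(q₋/q₊)`, the expectation functions
`b(φ) = e^{λφ}`, `c(φ) = m e^{λφ}`, `d(φ) = (1/m) e^{−λφ}`, `e(φ) = e^{−λφ}`
solve the linear systems governed by the linearization matrix at `(1,1)`. -/
theorem critical_expectation_solutions
    (qm qp β lam m : ℝ) (hqp : 0 < qp) (hq : qp < qm)
    (hβ : β = (1 / 2) * (Real.sqrt qm - Real.sqrt qp) ^ 2)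
    (hlam : lam = (1 / 2) * (qm - qp)) (hm : m = Real.sqrt (qm / qp)) :
    (∀ φ : ℝ,
      deriv (fun ψ : ℝ => Real.exp (lam * ψ)) φ
        = (β - qp) * Real.exp (lam * φ) + qp * (m * Real.exp (lam * φ)) ∧
      deriv (fun ψ : ℝ => m * Real.exp (lam * ψ)) φ
        = -qm * Real.exp (lam * φ) + (qm - β) * (m * Real.exp (lam * φ))) ∧
    (∀ φ : ℝ,
      deriv (fun ψ : ℝ => Real.exp (-lam * ψ)) φ
        = (β - qm) * Real.exp (-lam * φ) + qm * ((1 / m) * Real.exp (-lam * φ)) ∧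
      deriv (fun ψ : ℝ => (1 / m) * Real.exp (-lam * ψ)) φ
        = -qp * Real.exp (-lam * φ) + (qp - β) * ((1 / m) * Real.exp (-lam * φ))) := by
  have hqm : 0 < qm := hqp.trans hq
  set a := Real.sqrt qm with ha
  set b := Real.sqrt qp with hb
  have ha2 : a ^ 2 = qm := Real.sq_sqrt hqm.le
  have hb2 : b ^ 2 = qp := Real.sq_sqrt hqp.le
  have hbpos : 0 < b := Real.sqrt_pos.mpr hqp
  have hapos : 0 < a := Real.sqrt_pos.mpr hqm
  have hmab : m = a / b := by rw [hm, Real.sqrt_div' qm hqp.le]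
  have hmpos : 0 < m := by rw [hmab]; positivity
  -- key scalar identities
  have k1 : lam = (β - qp) + qp * m := by
    rw [hβ, hlam, hmab, ← ha2, ← hb2]; field_simp; ring
  have k2 : m * lam = -qm + (qm - β) * m := by
    rw [hβ, hlam, hmab, ← ha2, ← hb2]; field_simp; ring
  have k3 : -lam = (β - qm) + qm * (1 / m) := by
    have : (-lam) * m = ((β - qm) + qm * (1 / m)) * m := by
      rw [hβ, hlam, hmab, ← ha2, ← hb2]; field_simp; ring
    exact mul_right_cancel₀ hmpos.ne' this
  have k4 : (1 / m) * (-lam) = -qp + (qp - β) * (1 / m) := by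
    have : ((1 / m) * (-lam)) * m = (-qp + (qp - β) * (1 / m)) * m := by
      rw [hβ, hlam, hmab, ← ha2, ← hb2]; field_simp; ring
    exact mul_right_cancel₀ hmpos.ne' this
  refine ⟨fun φ => ⟨?_, ?_⟩, fun φ => ⟨?_, ?_⟩⟩
  · rw [deriv_exp_mul]; linear_combination Real.exp (lam * φ) * k1
  · rw [deriv_const_mul_exp_mul]; linear_combination Real.exp (lam * φ) * k2
  · rw [deriv_exp_mul]; linear_combination Real.exp (-lam * φ) * k3
  · rw [deriv_const_mul_exp_mul]; linear_combination Real.exp (-lam * φ) * k4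
end

section
/- Suppose β = β_c := ½(√q₋ − √q₊)² and set m = √(q₋/q₊). Then for every x with 0 < x < 1, putting y = 1 + m(x − 1), one has q₋(y − x) + β(y − y²) < m · (q₊(y − x) + β(x² − x)). (Since q₊(y − x) + β(x² − x) < 0 there, this says that at every point of the line of slope m through (1,1) inside the unit square, the slope dy/dx of an integral curve of the system x' = q₊(y − x) + β(x² − x), y' = q₋(y − x) + β(y − y²) is strictly greater than m.) -/
/-- In the critical case `β = β_c = ½(√q₋ − √q₊)²`, with `m = √(q₋/q₊)`, at every
point `(x, y)` with `0 < x < 1` and `y = 1 + m(x − 1)` (the sloping side of the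
triangle), one has `q₋(y − x) + β(y − y²) < m (q₊(y − x) + β(x² − x))`, and
`q₊(y − x) + β(x² − x) < 0` there: the slope `dy/dx` of an integral curve
exceeds `m`. -/
theorem slope_comparison_on_sloping_side
    (qm qp β m : ℝ) (hqp : 0 < qp) (hq : qp < qm)
    (hβ : β = (1 / 2) * (Real.sqrt qm - Real.sqrt qp) ^ 2)
    (hm : m = Real.sqrt (qm / qp)) :
    ∀ x : ℝ, 0 < x → x < 1 →
      qp * ((1 + m * (x - 1)) - x) + β * (x ^ 2 - x) < 0 ∧
      qm * ((1 + m * (x - 1)) - x) + β * ((1 + m * (x - 1)) - (1 + m * (x - 1)) ^ 2)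
        < m * (qp * ((1 + m * (x - 1)) - x) + β * (x ^ 2 - x)) := by
  intro x hx0 hx1
  set a := Real.sqrt qp with haa
  set b := Real.sqrt qm with hbb
  have ha0 : 0 < a := Real.sqrt_pos.mpr hqp
  have hb0 : 0 < b := Real.sqrt_pos.mpr (hqp.trans hq)
  have ha2 : a ^ 2 = qp := Real.sq_sqrt hqp.le
  have hb2 : b ^ 2 = qm := Real.sq_sqrt (hqp.trans hq).le
  have hab : a < b := by
    rw [haa, hbb]
    exact Real.sqrt_lt_sqrt hqp.le hq
  have hmba : m = b / a := by
    rw [hm, Real.sqrt_div' qm hqp.le]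
  have hm1 : 1 < m := by
    rw [hmba]
    rw [lt_div_iff₀ ha0]; linarith
  have hβ0 : 0 < β := by
    rw [hβ]
    have : 0 < (b - a) ^ 2 := pow_pos (sub_pos.mpr hab) 2
    linarith
  constructor
  · have h1 : qp * ((1 + m * (x - 1)) - x) < 0 := by
      have : (1 + m * (x - 1)) - x = (m - 1) * (x - 1) := by ring
      rw [this]
      have : (m - 1) * (x - 1) < 0 := mul_neg_of_pos_of_neg (by linarith) (by linarith)
      exact mul_neg_of_pos_of_neg hqp this
    have h2 : β * (x ^ 2 - x) < 0 := by
      have : x ^ 2 - x < 0 := by nlinarith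
      exact mul_neg_of_pos_of_neg hβ0 this
    linarith
  · rw [hmba, hβ, ← ha2, ← hb2]
    have hane : a ≠ 0 := ha0.ne'
    have key : b / a * (a ^ 2 * (1 + b / a * (x - 1) - x) + 1 / 2 * (b - a) ^ 2 * (x ^ 2 - x))
        - (b ^ 2 * (1 + b / a * (x - 1) - x)
          + 1 / 2 * (b - a) ^ 2 * (1 + b / a * (x - 1) - (1 + b / a * (x - 1)) ^ 2))
        = b * (b - a) ^ 2 * (b + a) * (1 - x) ^ 2 / (2 * a ^ 2) := by
      field_simp
      ring
    have hpos : 0 < b * (b - a) ^ 2 * (b + a) * (1 - x) ^ 2 / (2 * a ^ 2) := by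
      have h1 : 0 < (b - a) ^ 2 := pow_pos (sub_pos.mpr hab) 2
      have h2 : 0 < (1 - x) ^ 2 := pow_pos (by linarith) 2
      positivity
    linarith [key ▸ hpos]
end
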